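/- arXiv:1003.2374 — 5 statements merged into one kernel-verified Lean document; each statement's English description precedes it below -/
import Mathlib

section
/- Suppose Q satisfies the HSM inequality Q(u) ≥ (∫_Ω W|u|^{2*} dx)^{2/2*} for all u ∈ C_0^∞(Ω) with a positive continuous weight W, and let Ṽ ∈ L^∞_loc(Ω) be a nonzero potential satisfying |Ṽ|^{N/2} W^{(2−N)/2} ∈ L¹(Ω). Then the set S = {λ ∈ ℝ : Q̃_λ(u) = Q(u) + λ∫_Ω Ṽ|u|² dx ≥ 0 for all u ∈ C_0^∞(Ω)} is a closed interval whose interior is nonempty and contains 0. -/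
open MeasureTheory Filter Topology

noncomputable section

abbrev Euc (N : ℕ) := EuclideanSpace ℝ (Fin N)

/-- `u` is a test function on `Ω`, i.e. `u ∈ C_0^∞(Ω)`. -/
def TestFun {N : ℕ} (Ω : Set (Euc N)) (u : Euc N → ℝ) : Prop :=
  ContDiff ℝ (⊤ : ℕ∞) u ∧ HasCompactSupport u ∧ tsupport u ⊆ Ω

/-- `V ∈ L^∞_loc(Ω)`: `V` is bounded on every compact subset of `Ω`. -/
def LocBdd {N : ℕ} (Ω : Set (Euc N)) (V : Euc N → ℝ) : Prop :=
  ∀ K : Set (Euc N), IsCompact K → K ⊆ Ω → ∃ C : ℝ, ∀ x ∈ K, |V x| ≤ C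

/-- The functional `Q(u) = ∫_Ω (|∇u|^p + V|u|^p) dx`. -/
def Qfun {N : ℕ} (Ω : Set (Euc N)) (V : Euc N → ℝ) (p : ℝ) (u : Euc N → ℝ) : ℝ :=
  ∫ x in Ω, (‖gradient u x‖ ^ p + V x * |u x| ^ p)

/-- The critical Sobolev exponent `p* = pN/(N-p)`. -/
def pStar (p : ℝ) (N : ℕ) : ℝ := p * N / (N - p)

/-- `φ ∈ C¹(Ω)` is a ground state of the functional `Q`: it is an `L^p_loc(Ω)`-limit of a
null sequence, i.e. a sequence of nonnegative test functions `φk` with `Q(φk) → 0` and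
`∫_B |φk|^p dx = 1` for some fixed open set `B` compactly contained in `Ω`. -/
def IsGroundState {N : ℕ} (Ω : Set (Euc N)) (V : Euc N → ℝ) (p : ℝ) (φ : Euc N → ℝ) : Prop :=
  ContDiffOn ℝ 1 φ Ω ∧
  ∃ (φk : ℕ → Euc N → ℝ) (B : Set (Euc N)),
    IsOpen B ∧ B.Nonempty ∧ IsCompact (closure B) ∧ closure B ⊆ Ω ∧
    (∀ k, TestFun Ω (φk k) ∧ ∀ x, 0 ≤ φk k x) ∧
    Tendsto (fun k => Qfun Ω V p (φk k)) atTop (𝓝 0) ∧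
    (∀ k, ∫ x in B, |φk k x| ^ p = 1) ∧
    (∀ K : Set (Euc N), IsCompact K → K ⊆ Ω →
      Tendsto (fun k => ∫ x in K, |φk k x - φ x| ^ p) atTop (𝓝 0))

lemma helper_integrableOn {N : ℕ} {Ω K : Set (Euc N)} (hΩo : IsOpen Ω) (hK : IsCompact K)
    (hKΩ : K ⊆ Ω) {h : Euc N → ℝ} (hc : ContinuousOn h Ω) (h0 : ∀ x ∉ K, h x = 0) :
    IntegrableOn h Ω := by
  have h1 : IntegrableOn h K := (hc.mono hKΩ).integrableOn_compact hK
  have h2 : IntegrableOn h (Ω \ K) :=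
    integrableOn_zero.congr_fun (fun x hx => (h0 x hx.2).symm)
      (hΩo.measurableSet.diff hK.measurableSet)
  exact (h2.union h1).mono_set (fun x hx => by
    by_cases hxK : x ∈ K
    · exact Or.inr hxK
    · exact Or.inl ⟨hx, hxK⟩)

lemma helper_memLp {α : Type*} [MeasurableSpace α] {μ : Measure α} {f : α → ℝ} {P : ℝ}
    (hP : 0 < P) (hm : AEStronglyMeasurable f μ) (hnn : 0 ≤ᵐ[μ] f)
    (hi : Integrable (fun x => f x ^ P) μ) : MemLp f (ENNReal.ofReal P) μ := by
  have hne : ENNReal.ofReal P ≠ 0 := by simp [ENNReal.ofReal_eq_zero, not_le, hP]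
  have htop : ENNReal.ofReal P ≠ ⊤ := ENNReal.ofReal_ne_top
  have h1 : MemLp (fun x : α => ‖f x‖ ^ (ENNReal.ofReal P).toReal)
      (ENNReal.ofReal P / ENNReal.ofReal P) μ := by
    rw [ENNReal.div_self hne htop, memLp_one_iff_integrable]
    refine hi.congr ?_
    filter_upwards [hnn] with x hx
    rw [ENNReal.toReal_ofReal hP.le, Real.norm_of_nonneg hx]
  exact (memLp_norm_rpow_iff hm hne htop).1 h1

set_option maxHeartbeats 1000000 in
lemma key_lemma {N : ℕ} (hN : 2 < N) (Ω : Set (Euc N)) (hΩo : IsOpen Ω)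
    (V : Euc N → ℝ)
    (W : Euc N → ℝ) (hWc : ContinuousOn W Ω) (hWpos : ∀ x ∈ Ω, 0 < W x)
    (hHSM : ∀ u : Euc N → ℝ, TestFun Ω u →
      (∫ x in Ω, W x * |u x| ^ pStar 2 N) ^ (2 / pStar 2 N) ≤ Qfun Ω V 2 u)
    (Vt : Euc N → ℝ)
    (hVtW : IntegrableOn (fun x => |Vt x| ^ ((N : ℝ) / 2) * W x ^ ((2 - (N : ℝ)) / 2)) Ω)
    (u : Euc N → ℝ) (hu : TestFun Ω u) :
    ∃ a b : ℝ,
      |b| ≤ ((∫ x in Ω, |Vt x| ^ ((N : ℝ) / 2) * W x ^ ((2 - (N : ℝ)) / 2)) ^ (2 / (N : ℝ)) + 1) * a ∧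
      ∀ lam : ℝ, (0 ≤ Qfun Ω (fun x => V x + lam * Vt x) 2 u ↔ 0 ≤ a + lam * b) := by
  obtain ⟨husm, hucs, husupp⟩ := hu
  have hn : (2:ℝ) < (N:ℝ) := by exact_mod_cast hN
  have hn0 : (N:ℝ) ≠ 0 := by positivity
  have hn2 : (N:ℝ) - 2 ≠ 0 := by intro h; nlinarith
  set C₀ := ∫ x in Ω, |Vt x| ^ ((N : ℝ) / 2) * W x ^ ((2 - (N : ℝ)) / 2) with hC0def
  have hC0 : 0 ≤ C₀ := setIntegral_nonneg hΩo.measurableSet (fun x hx =>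
    mul_nonneg (Real.rpow_nonneg (abs_nonneg _) _) (Real.rpow_nonneg (hWpos x hx).le _))
  set C := C₀ ^ (2 / (N:ℝ)) with hCdef
  have hC : 0 ≤ C := Real.rpow_nonneg hC0 _
  by_cases hu0 : ∀ x, u x = 0
  · refine ⟨0, 0, by simp, fun lam => ?_⟩
    have hu' : u = fun _ => 0 := funext hu0
    have hQ0 : Qfun Ω (fun x => V x + lam * Vt x) 2 u = 0 := by
      rw [Qfun, hu']
      simp [gradient_const, Real.zero_rpow (two_ne_zero (α := ℝ))]
    rw [hQ0]; simp
  · push_neg at hu0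
    obtain ⟨x₀, hx₀⟩ := hu0
    have hKc : IsCompact (tsupport u) := hucs
    have hups : (0:ℝ) < pStar 2 N := by
      rw [pStar]; apply div_pos <;> nlinarith
    have hucont : Continuous u := husm.continuous
    set Xf : Euc N → ℝ := fun x => W x * |u x| ^ pStar 2 N with hXfdef
    have hXfc : ContinuousOn Xf Ω :=
      hWc.mul ((hucont.abs.rpow_const (fun x => Or.inr hups.le)).continuousOn)
    have hXf0 : ∀ x ∉ tsupport u, Xf x = 0 := fun x hx => by
      simp [hXfdef, image_eq_zero_of_notMem_tsupport hx, Real.zero_rpow hups.ne']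
    have hXint : IntegrableOn Xf Ω := helper_integrableOn hΩo hKc husupp hXfc hXf0
    have hXnn : 0 ≤ᵐ[volume.restrict Ω] Xf :=
      (ae_restrict_iff' hΩo.measurableSet).2 (ae_of_all _ fun x hx =>
        mul_nonneg (hWpos x hx).le (Real.rpow_nonneg (abs_nonneg _) _))
    have hx₀Ω : x₀ ∈ Ω := husupp (subset_tsupport u hx₀)
    have hXpos : 0 < ∫ x in Ω, Xf x := by
      rw [setIntegral_pos_iff_support_of_nonneg_ae hXnn hXint]
      have hXx₀ : 0 < Xf x₀ :=
        mul_pos (hWpos x₀ hx₀Ω) (Real.rpow_pos_of_pos (abs_pos.2 hx₀) _)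
      have hca : ContinuousAt Xf x₀ := hXfc.continuousAt (hΩo.mem_nhds hx₀Ω)
      have hev : {x | 0 < Xf x} ∈ 𝓝 x₀ := hca (Ioi_mem_nhds hXx₀)
      obtain ⟨o, ho_sub, ho_open, hx₀o⟩ :=
        mem_nhds_iff.1 (Filter.inter_mem hev (hΩo.mem_nhds hx₀Ω))
      refine lt_of_lt_of_le (ho_open.measure_pos volume ⟨x₀, hx₀o⟩) (measure_mono ?_)
      intro x hx
      exact ⟨(ho_sub hx).1.ne', (ho_sub hx).2⟩
    have hHSMu := hHSM u ⟨husm, hucs, husupp⟩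
    set X := ∫ x in Ω, Xf x with hXdef
    set Y := X ^ (2 / pStar 2 N) with hYdef
    have hY : 0 < Y := Real.rpow_pos_of_pos hXpos _
    set A : Euc N → ℝ := fun x => ‖gradient u x‖ ^ (2:ℝ) + V x * |u x| ^ (2:ℝ) with hAdef
    have hQV : Qfun Ω V 2 u = ∫ x in Ω, A x := rfl
    have ha_pos : 0 < Qfun Ω V 2 u := lt_of_lt_of_le hY hHSMu
    have hAint : IntegrableOn A Ω := by
      by_contra hcon
      rw [hQV, integral_undef hcon] at ha_pos
      exact lt_irrefl _ ha_pos
    set B : Euc N → ℝ := fun x => Vt x * |u x| ^ (2:ℝ) with hBdef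
    have hQlam : ∀ lam : ℝ, Qfun Ω (fun x => V x + lam * Vt x) 2 u
        = ∫ x in Ω, (A x + lam * B x) := by
      intro lam
      rw [Qfun]
      congr 1
      funext x
      simp only [hAdef, hBdef]
      ring
    -- Hölder inequality
    have hconj : Real.HolderConjugate ((N:ℝ)/2) ((N:ℝ)/((N:ℝ)-2)) := by
      rw [Real.holderConjugate_iff]
      constructor
      · linarith
      · field_simp; ring
    set f : Euc N → ℝ := fun x => |Vt x| * W x ^ ((2-(N:ℝ))/(N:ℝ)) with hfdef
    set g : Euc N → ℝ := fun x => W x ^ (((N:ℝ)-2)/(N:ℝ)) * |u x| ^ (2:ℝ) with hgdef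
    have hae : ∀ᵐ x ∂(volume.restrict Ω), x ∈ Ω := ae_restrict_mem hΩo.measurableSet
    have hfm : AEStronglyMeasurable f (volume.restrict Ω) := by
      have h1 : AEStronglyMeasurable
          (fun x => (|Vt x| ^ ((N:ℝ)/2) * W x ^ ((2-(N:ℝ))/2)) ^ (2/(N:ℝ)))
          (volume.restrict Ω) :=
        (Real.continuous_rpow_const (by positivity)).comp_aestronglyMeasurable
          hVtW.aestronglyMeasurable
      refine h1.congr ?_
      filter_upwards [hae] with x hx
      have hW := (hWpos x hx).le
      rw [Real.mul_rpow (Real.rpow_nonneg (abs_nonneg _) _) (Real.rpow_nonneg hW _),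
        ← Real.rpow_mul (abs_nonneg _), ← Real.rpow_mul hW,
        show (N:ℝ)/2 * (2/(N:ℝ)) = 1 by field_simp,
        show (2-(N:ℝ))/2 * (2/(N:ℝ)) = (2-(N:ℝ))/(N:ℝ) by field_simp,
        Real.rpow_one]
    have hfnn : 0 ≤ᵐ[volume.restrict Ω] f := by
      filter_upwards [hae] with x hx
      exact mul_nonneg (abs_nonneg _) (Real.rpow_nonneg (hWpos x hx).le _)
    have hfP_eq : ∀ x ∈ Ω, |Vt x| ^ ((N : ℝ) / 2) * W x ^ ((2 - (N : ℝ)) / 2)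
        = f x ^ ((N:ℝ)/2) := by
      intro x hx
      have hW := (hWpos x hx).le
      rw [hfdef]
      rw [Real.mul_rpow (abs_nonneg _) (Real.rpow_nonneg hW _), ← Real.rpow_mul hW,
        show (2-(N:ℝ))/(N:ℝ) * ((N:ℝ)/2) = (2-(N:ℝ))/2 by field_simp]
    have hfP : Integrable (fun x => f x ^ ((N:ℝ)/2)) (volume.restrict Ω) := by
      refine hVtW.congr ?_
      filter_upwards [hae] with x hx
      exact hfP_eq x hx
    have hfLp : MemLp f (ENNReal.ofReal ((N:ℝ)/2)) (volume.restrict Ω) :=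
      helper_memLp (by positivity) hfm hfnn hfP
    have hgm : AEStronglyMeasurable g (volume.restrict Ω) := by
      have h1 : AEMeasurable W (volume.restrict Ω) := hWc.aemeasurable hΩo.measurableSet
      have h2 : AEMeasurable (fun x => W x ^ (((N:ℝ)-2)/(N:ℝ))) (volume.restrict Ω) :=
        (Real.continuous_rpow_const (le_of_lt (div_pos (by linarith) (by linarith)))).measurable.comp_aemeasurable h1
      exact (h2.mul ((hucont.abs.rpow_const
        (fun x => Or.inr (by norm_num))).aemeasurable)).aestronglyMeasurable
    have hgnn : 0 ≤ᵐ[volume.restrict Ω] g := by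
      filter_upwards [hae] with x hx
      exact mul_nonneg (Real.rpow_nonneg (hWpos x hx).le _) (Real.rpow_nonneg (abs_nonneg _) _)
    have hgQ_eq : ∀ x ∈ Ω, Xf x = g x ^ ((N:ℝ)/((N:ℝ)-2)) := by
      intro x hx
      have hW := (hWpos x hx).le
      rw [hgdef, hXfdef]
      rw [Real.mul_rpow (Real.rpow_nonneg hW _) (Real.rpow_nonneg (abs_nonneg _) _),
        ← Real.rpow_mul hW, ← Real.rpow_mul (abs_nonneg _),
        show ((N:ℝ)-2)/(N:ℝ) * ((N:ℝ)/((N:ℝ)-2)) = 1 by field_simp,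
        show (2:ℝ) * ((N:ℝ)/((N:ℝ)-2)) = pStar 2 N by rw [pStar]; field_simp,
        Real.rpow_one]
    have hgQ : Integrable (fun x => g x ^ ((N:ℝ)/((N:ℝ)-2))) (volume.restrict Ω) := by
      refine hXint.congr ?_
      filter_upwards [hae] with x hx
      exact hgQ_eq x hx
    have hgLp : MemLp g (ENNReal.ofReal ((N:ℝ)/((N:ℝ)-2))) (volume.restrict Ω) :=
      helper_memLp (by apply div_pos <;> nlinarith) hgm hgnn hgQ
    have hH := integral_mul_le_Lp_mul_Lq_of_nonneg hconj hfnn hgnn hfLp hgLp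
    have hLHS : (∫ x in Ω, f x * g x) = ∫ x in Ω, |Vt x| * |u x| ^ (2:ℝ) := by
      refine setIntegral_congr_fun hΩo.measurableSet (fun x hx => ?_)
      have hW := hWpos x hx
      rw [hfdef, hgdef]
      show |Vt x| * W x ^ ((2-(N:ℝ))/(N:ℝ)) * (W x ^ (((N:ℝ)-2)/(N:ℝ)) * |u x| ^ (2:ℝ)) = _
      rw [mul_assoc, ← mul_assoc (W x ^ ((2-(N:ℝ))/(N:ℝ))), ← Real.rpow_add hW,
        show (2-(N:ℝ))/(N:ℝ) + ((N:ℝ)-2)/(N:ℝ) = 0 by field_simp; ring,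
        Real.rpow_zero, one_mul]
    have hRf : (∫ x in Ω, f x ^ ((N:ℝ)/2)) = C₀ := by
      rw [hC0def]
      refine (setIntegral_congr_fun hΩo.measurableSet (fun x hx => ?_)).symm
      exact hfP_eq x hx
    have hRg : (∫ x in Ω, g x ^ ((N:ℝ)/((N:ℝ)-2))) = X := by
      rw [hXdef]
      refine (setIntegral_congr_fun hΩo.measurableSet (fun x hx => ?_)).symm
      exact hgQ_eq x hx
    have hexpY : (2:ℝ) / pStar 2 N = ((N:ℝ)-2)/(N:ℝ) := by
      rw [pStar]
      rw [div_div_eq_mul_div]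
      field_simp
    have hHolder : (∫ x in Ω, |Vt x| * |u x| ^ (2:ℝ)) ≤ C * Y := by
      rw [← hLHS]
      refine le_trans hH ?_
      rw [hRf, hRg, hCdef, hYdef, hexpY,
        show 1/((N:ℝ)/2) = 2/(N:ℝ) by rw [one_div_div],
        show 1/((N:ℝ)/((N:ℝ)-2)) = ((N:ℝ)-2)/(N:ℝ) by rw [one_div_div]]
    have habs : (∫ x in Ω, |B x|) = ∫ x in Ω, |Vt x| * |u x| ^ (2:ℝ) := by
      congr 1
      funext x
      rw [hBdef]
      show |Vt x * |u x| ^ (2:ℝ)| = _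
      rw [abs_mul, abs_of_nonneg (Real.rpow_nonneg (abs_nonneg _) _)]
    have hYa : Y ≤ Qfun Ω V 2 u := hHSMu
    by_cases hBint : IntegrableOn B Ω
    · refine ⟨Qfun Ω V 2 u, ∫ x in Ω, B x, ?_, fun lam => ?_⟩
      · have h1 : |∫ x in Ω, B x| ≤ ∫ x in Ω, |B x| := by
          simpa [Real.norm_eq_abs] using
            norm_integral_le_integral_norm (μ := volume.restrict Ω) B
        rw [habs] at h1
        nlinarith
      · rw [hQlam lam, integral_add hAint (hBint.const_mul lam), integral_const_mul, hQV]
    · refine ⟨Qfun Ω V 2 u, 0, by simpa using mul_nonneg (by linarith) ha_pos.le, fun lam => ?_⟩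
      have hright : (0:ℝ) ≤ Qfun Ω V 2 u + lam * 0 := by simpa using ha_pos.le
      have hleft : 0 ≤ Qfun Ω (fun x => V x + lam * Vt x) 2 u := by
        rcases eq_or_ne lam 0 with h | h
        · subst h
          rw [hQlam 0]
          simp only [zero_mul, add_zero]
          rw [← hQV]
          exact ha_pos.le
        · have hni : ¬ Integrable (fun x => A x + lam * B x) (volume.restrict Ω) := by
            intro hcon
            apply hBint
            have h2 : Integrable (fun x => lam * B x) (volume.restrict Ω) :=
              (hcon.sub hAint).congr (ae_of_all _ fun x => by simp only [Pi.sub_apply, hAdef, hBdef]; ring)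
            have h3 := h2.const_mul lam⁻¹
            refine h3.congr (ae_of_all _ fun x => ?_)
            field_simp
          rw [hQlam lam, integral_undef hni]
      exact iff_of_true hleft hright

/-- Theorem 2.7 (iii), first part: under the hypotheses of Theorem 2.7, the set
`S = {λ ∈ ℝ : Q̃_λ ≥ 0 on C_0^∞(Ω)}` is a closed interval whose interior is nonempty and
contains `0`. -/
theorem statement_5 {N : ℕ} (hN : 2 < N) (Ω : Set (Euc N)) (hΩo : IsOpen Ω)
    (hΩc : IsConnected Ω) (V : Euc N → ℝ) (hV : LocBdd Ω V)
    (W : Euc N → ℝ) (hWc : ContinuousOn W Ω) (hWpos : ∀ x ∈ Ω, 0 < W x)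
    (hHSM : ∀ u : Euc N → ℝ, TestFun Ω u →
      (∫ x in Ω, W x * |u x| ^ pStar 2 N) ^ (2 / pStar 2 N) ≤ Qfun Ω V 2 u)
    (Vt : Euc N → ℝ) (hVt : LocBdd Ω Vt)
    (hVtne : ¬ (∀ᵐ x ∂(volume.restrict Ω), Vt x = 0))
    (hVtW : IntegrableOn (fun x => |Vt x| ^ ((N : ℝ) / 2) * W x ^ ((2 - (N : ℝ)) / 2)) Ω) :
    IsClosed {lam : ℝ | ∀ u : Euc N → ℝ, TestFun Ω u →
        0 ≤ Qfun Ω (fun x => V x + lam * Vt x) 2 u} ∧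
      Set.OrdConnected {lam : ℝ | ∀ u : Euc N → ℝ, TestFun Ω u →
        0 ≤ Qfun Ω (fun x => V x + lam * Vt x) 2 u} ∧
      (0 : ℝ) ∈ interior {lam : ℝ | ∀ u : Euc N → ℝ, TestFun Ω u →
        0 ≤ Qfun Ω (fun x => V x + lam * Vt x) 2 u} := by
  classical
  have key := fun u hu => key_lemma hN Ω hΩo V W hWc hWpos hHSM Vt hVtW u hu
  choose a b hab hiff using key
  obtain ⟨C, hC, hab⟩ : ∃ C : ℝ, 0 ≤ C ∧
      ∀ (u : Euc N → ℝ) (hu : TestFun Ω u), |b u hu| ≤ (C + 1) * a u hu :=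
    ⟨_, Real.rpow_nonneg (setIntegral_nonneg hΩo.measurableSet (fun x hx =>
      mul_nonneg (Real.rpow_nonneg (abs_nonneg _) _)
        (Real.rpow_nonneg (hWpos x hx).le _))) _, hab⟩
  refine ⟨?_, ?_, ?_⟩
  · have hSeq : {lam : ℝ | ∀ u : Euc N → ℝ, TestFun Ω u →
        0 ≤ Qfun Ω (fun x => V x + lam * Vt x) 2 u}
        = ⋂ (u : Euc N → ℝ), ⋂ (hu : TestFun Ω u),
            {lam : ℝ | 0 ≤ a u hu + lam * b u hu} := by
      ext lam
      simp only [Set.mem_setOf_eq, Set.mem_iInter]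
      exact ⟨fun h u hu => (hiff u hu lam).1 (h u hu),
        fun h u hu => (hiff u hu lam).2 (h u hu)⟩
    rw [hSeq]
    exact isClosed_iInter fun u => isClosed_iInter fun hu =>
      isClosed_le continuous_const (by fun_prop)
  · constructor
    intro x hx y hy z hz
    intro u hu
    refine (hiff u hu z).2 ?_
    have h1 := (hiff u hu x).1 (hx u hu)
    have h2 := (hiff u hu y).1 (hy u hu)
    rcases le_total 0 (b u hu) with hb | hb
    · nlinarith [hz.1, hz.2]
    · nlinarith [hz.1, hz.2]
  · have hball : Metric.ball (0:ℝ) (1/(C+1)) ⊆ {lam : ℝ | ∀ u : Euc N → ℝ, TestFun Ω u →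
        0 ≤ Qfun Ω (fun x => V x + lam * Vt x) 2 u} := by
      intro lam hlam
      simp only [Metric.mem_ball, Real.dist_eq, sub_zero] at hlam
      intro u hu
      refine (hiff u hu lam).2 ?_
      have hab' := hab u hu
      have ha : 0 ≤ a u hu := by nlinarith [abs_nonneg (b u hu)]
      have h1 : |lam * b u hu| ≤ a u hu := by
        rw [abs_mul]
        calc |lam| * |b u hu| ≤ (1/(C+1)) * ((C+1) * a u hu) := by
              apply mul_le_mul hlam.le hab' (abs_nonneg _) (by positivity)
          _ = a u hu := by field_simp
      nlinarith [neg_abs_le (lam * b u hu)]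
    exact interior_maximal hball Metric.isOpen_ball (Metric.mem_ball_self (by positivity))
end
end

section
/- Let Ω ⊆ ℝ^N be a domain, 1 < p < N, and let Q(u) = ∫_Ω (|∇u|^p + V|u|^p) dx with V ∈ L^∞_loc(Ω) be nonnegative on C_0^∞(Ω). Suppose Q admits a ground state φ, W is a continuous positive function on Ω with φ ∉ L^{p*}(Ω, W dx), and V₁ ∈ L^∞(Ω) is a nonzero nonnegative function with compact support in Ω. Then the functional Q_{V₁}(u) = Q(u) + ∫_Ω V₁|u|^p dx does not satisfy the HSM inequality with weight W: there is no constant C > 0 with Q_{V₁}(u) ≥ C(∫_Ω W|u|^{p*} dx)^{p/p*} for all u ∈ C_0^∞(Ω). -/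
open MeasureTheory Filter Topology

noncomputable section

section helpers

lemma rpow_add_le {a b p : ℝ} (ha : 0 ≤ a) (hb : 0 ≤ b) (hp : 0 ≤ p) :
    (a + b) ^ p ≤ 2 ^ p * (a ^ p + b ^ p) := by
  have h1 : a + b ≤ 2 * max a b := by
    rcases le_total a b with h | h
    · simp [max_eq_right h]; linarith
    · simp [max_eq_left h]; linarith
  have h2 : (a + b) ^ p ≤ (2 * max a b) ^ p :=
    Real.rpow_le_rpow (by linarith) h1 hp
  have h3 : (2 * max a b) ^ p = 2 ^ p * (max a b) ^ p :=
    Real.mul_rpow (by norm_num) (le_max_of_le_left ha)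
  have h4 : (max a b) ^ p ≤ a ^ p + b ^ p := by
    rcases le_total a b with h | h
    · rw [max_eq_right h]
      nlinarith [Real.rpow_nonneg ha p]
    · rw [max_eq_left h]
      nlinarith [Real.rpow_nonneg hb p]
  calc (a + b) ^ p ≤ 2 ^ p * (max a b) ^ p := by rw [← h3]; exact h2
    _ ≤ 2 ^ p * (a ^ p + b ^ p) := by
        have : (0:ℝ) ≤ (2:ℝ) ^ p := Real.rpow_nonneg (by norm_num) p
        nlinarith

open Set Metric in
lemma open_exhaustion {N : ℕ} {Ω : Set (Euc N)} (hΩ : IsOpen Ω) :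
    ∃ K : ℕ → Set (Euc N), (∀ n, IsCompact (K n)) ∧ (∀ n, K n ⊆ Ω) ∧
      Monotone K ∧ (⋃ n, K n) = Ω := by
  refine ⟨fun n => closedBall 0 n ∩ {x | ∀ y ∉ Ω, 1/(n+1) ≤ dist x y}, ?_, ?_, ?_, ?_⟩
  · intro n
    have hcl : IsClosed ({x : Euc N | ∀ y ∉ Ω, 1/(n+1) ≤ dist x y}) := by
      have : {x : Euc N | ∀ y ∉ Ω, 1/(n+1) ≤ dist x y}
          = ⋂ (y : Euc N) (_ : y ∉ Ω), {x | 1/(n+1) ≤ dist x y} := by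
        ext x; simp
      rw [this]
      exact isClosed_iInter fun y => isClosed_iInter fun _ =>
        isClosed_le continuous_const (continuous_id.dist continuous_const)
    exact (isCompact_closedBall _ _).inter_right hcl
  · intro n x hx
    by_contra hxΩ
    have h1 := hx.2 x hxΩ
    rw [dist_self] at h1
    have : (0:ℝ) < 1/(n+1) := by positivity
    linarith
  · intro m n hmn
    apply inter_subset_inter
    · exact closedBall_subset_closedBall (by exact_mod_cast hmn)
    · intro x hx y hy
      refine le_trans ?_ (hx y hy)
      apply one_div_le_one_div_of_le (by positivity)
      have : (m:ℝ) ≤ n := by exact_mod_cast hmn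
      linarith
  · apply Subset.antisymm
    · intro x hx
      obtain ⟨n, hx⟩ := mem_iUnion.mp hx
      by_contra h
      have h1 := hx.2 x h
      rw [dist_self] at h1
      have : (0:ℝ) < 1/((n:ℝ)+1) := by positivity
      linarith
    · intro x hx
      obtain ⟨r, hr, hball⟩ := Metric.isOpen_iff.mp hΩ x hx
      obtain ⟨n, hn⟩ := exists_nat_gt (max ‖x‖ (1/r))
      refine mem_iUnion.mpr ⟨n, ?_, ?_⟩
      · simp only [mem_closedBall, dist_zero_right]
        exact le_of_lt (lt_of_le_of_lt (le_max_left _ _) hn)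
      · intro y hy
        have hry : r ≤ dist x y := by
          by_contra h
          exact hy (hball (by simpa [Metric.mem_ball, dist_comm] using lt_of_not_ge h))
        refine le_trans ?_ hry
        have h1r : 1/r < n := lt_of_le_of_lt (le_max_right _ _) hn
        rw [div_le_iff₀ (by positivity)]
        rw [div_lt_iff₀ hr] at h1r
        nlinarith

lemma tendstoInMeasure_of_int {α : Type*} [MeasurableSpace α] {μ : Measure α} {p : ℝ} (hp : 0 < p)
    {f : ℕ → α → ℝ} {g : α → ℝ}
    (hfm : ∀ k, AEMeasurable (fun x => |f k x - g x| ^ p) μ)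
    (hfi : ∀ k, Integrable (fun x => |f k x - g x| ^ p) μ)
    (h : Tendsto (fun k => ∫ x, |f k x - g x| ^ p ∂μ) atTop (𝓝 0)) :
    TendstoInMeasure μ f atTop g := by
  rw [tendstoInMeasure_iff_dist]
  intro ε hε
  have hεp : 0 < ε ^ p := Real.rpow_pos_of_pos hε p
  set c : ENNReal := ENNReal.ofReal (ε ^ p) with hc
  have hc0 : c ≠ 0 := by simp [hc, ENNReal.ofReal_eq_zero, not_le, hεp]
  have hcT : c ≠ ⊤ := ENNReal.ofReal_ne_top
  have key : ∀ k, μ {x | ε ≤ dist (f k x) (g x)} ≤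
      c⁻¹ * ENNReal.ofReal (∫ x, |f k x - g x| ^ p ∂μ) := by
    intro k
    have hsub : {x | ε ≤ dist (f k x) (g x)} ⊆
        {x | c ≤ ENNReal.ofReal (|f k x - g x| ^ p)} := by
      intro x hx
      apply ENNReal.ofReal_le_ofReal
      simp only [Set.mem_setOf_eq, Real.dist_eq] at hx
      exact Real.rpow_le_rpow hε.le hx hp.le
    have hml := mul_meas_ge_le_lintegral₀
      (ENNReal.measurable_ofReal.comp_aemeasurable (hfm k)) c
    have hlin : ∫⁻ x, ENNReal.ofReal (|f k x - g x| ^ p) ∂μ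
        = ENNReal.ofReal (∫ x, |f k x - g x| ^ p ∂μ) :=
      (ofReal_integral_eq_lintegral_ofReal (hfi k)
        (Eventually.of_forall fun x => Real.rpow_nonneg (abs_nonneg _) p)).symm
    have h1 : c * μ {x | ε ≤ dist (f k x) (g x)} ≤
        ENNReal.ofReal (∫ x, |f k x - g x| ^ p ∂μ) := by
      calc c * μ {x | ε ≤ dist (f k x) (g x)}
          ≤ c * μ {x | c ≤ ENNReal.ofReal (|f k x - g x| ^ p)} := by
            exact mul_le_mul_right (measure_mono hsub) c
        _ ≤ _ := by rw [← hlin]; exact hml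
    rw [mul_comm] at h1
    have h2 := (ENNReal.le_div_iff_mul_le (Or.inl hc0) (Or.inl hcT)).mpr h1
    rwa [ENNReal.div_eq_inv_mul] at h2
  have hlim : Tendsto (fun k => c⁻¹ * ENNReal.ofReal (∫ x, |f k x - g x| ^ p ∂μ))
      atTop (𝓝 0) := by
    have h0 : Tendsto (fun k => ENNReal.ofReal (∫ x, |f k x - g x| ^ p ∂μ)) atTop (𝓝 0) := by
      have := (ENNReal.continuous_ofReal.tendsto 0).comp h
      simpa [Function.comp_def] using this
    have := ENNReal.Tendsto.const_mul h0 (Or.inr (ENNReal.inv_ne_top.mpr hc0))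
    simpa using this
  exact tendsto_of_tendsto_of_tendsto_of_le_of_le tendsto_const_nhds hlim
    (fun k => zero_le) key

end helpers

/-- Example 2.5 and Remark 2.6: if the nonnegative functional `Q` admits a
ground state `φ`, `W` is a continuous positive function on `Ω` with `φ ∉ L^{p*}(Ω, W dx)`, and
`V₁ ∈ L^∞(Ω)` is a nonzero nonnegative function with compact support in `Ω`, then the functional
`Q_{V₁}(u) = Q(u) + ∫_Ω V₁|u|^p dx` does not satisfy the HSM inequality with weight `W`. -/
theorem statement_9 {N : ℕ} (Ω : Set (Euc N)) (hΩo : IsOpen Ω) (hΩc : IsConnected Ω)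
    (V : Euc N → ℝ) (hV : LocBdd Ω V) (p : ℝ) (hp1 : 1 < p) (hpN : p < N)
    (hQ : ∀ u : Euc N → ℝ, TestFun Ω u → 0 ≤ Qfun Ω V p u)
    (φ : Euc N → ℝ) (hφ : IsGroundState Ω V p φ)
    (W : Euc N → ℝ) (hWc : ContinuousOn W Ω) (hWpos : ∀ x ∈ Ω, 0 < W x)
    (hφW : ¬ IntegrableOn (fun x => W x * |φ x| ^ pStar p N) Ω)
    (V₁ : Euc N → ℝ) (hV₁bdd : ∃ C : ℝ, ∀ x ∈ Ω, |V₁ x| ≤ C)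
    (hV₁nn : ∀ x, 0 ≤ V₁ x) (hV₁supp : HasCompactSupport V₁) (hV₁sub : tsupport V₁ ⊆ Ω)
    (hV₁ne : ¬ (∀ᵐ x ∂(volume.restrict Ω), V₁ x = 0)) :
    ¬ ∃ C : ℝ, 0 < C ∧ ∀ u : Euc N → ℝ, TestFun Ω u →
        C * (∫ x in Ω, W x * |u x| ^ pStar p N) ^ (p / pStar p N) ≤
          Qfun Ω V p u + ∫ x in Ω, V₁ x * |u x| ^ p := by
  rintro ⟨C, hC, hineq⟩
  obtain ⟨hφC1, φk, B, hBo, hBne, hBc, hBΩ, hφk, hQ0, hnorm, hLp⟩ := hφ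
  set q := pStar p N with hq
  have hp0 : (0:ℝ) < p := by linarith
  have hNp : (0:ℝ) < (N:ℝ) - p := by linarith
  have hN0 : (0:ℝ) < (N:ℝ) := by linarith
  have hqpos : 0 < q := by
    rw [hq, pStar]; positivity
  have hφcont : ContinuousOn φ Ω := hφC1.continuousOn
  have hφkc : ∀ k, Continuous (φk k) := fun k => (hφk k).1.1.continuous
  set S := tsupport V₁ with hS
  have hScpt : IsCompact S := hV₁supp
  have hSmeas : MeasurableSet S := hScpt.isClosed.measurableSet
  -- continuity facts on compact subsets
  have contdiff : ∀ (k : ℕ) (K : Set (Euc N)), K ⊆ Ω →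
      ContinuousOn (fun x => |φk k x - φ x| ^ p) K := by
    intro k K hKΩ
    apply ContinuousOn.rpow_const
    · exact (((hφkc k).continuousOn.sub (hφcont.mono hKΩ))).abs
    · exact fun x _ => Or.inr hp0.le
  have intdiff : ∀ (k : ℕ) (K : Set (Euc N)), IsCompact K → K ⊆ Ω →
      IntegrableOn (fun x => |φk k x - φ x| ^ p) K := by
    intro k K hKc hKΩ
    exact (contdiff k K hKΩ).integrableOn_compact hKc
  have contabs : ∀ (g : Euc N → ℝ) (K : Set (Euc N)), ContinuousOn g K →
      ContinuousOn (fun x => |g x| ^ p) K := by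
    intro g K hg
    exact hg.abs.rpow_const fun x _ => Or.inr hp0.le
  -- Step B : eventual bound on the right-hand side
  obtain ⟨C₀, hC₀⟩ := hV₁bdd
  set C₁ := max C₀ 0 with hC₁
  have hC₁0 : 0 ≤ C₁ := le_max_right _ _
  set Iφ := ∫ x in S, |φ x| ^ p with hIφ
  have hIφ0 : 0 ≤ Iφ := by
    apply setIntegral_nonneg hSmeas
    exact fun x _ => Real.rpow_nonneg (abs_nonneg _) p
  set M := 1 + C₁ * (2 ^ p * (1 + Iφ)) with hM
  have hM0 : 0 < M := by
    have h2p : (0:ℝ) ≤ 2 ^ p := Real.rpow_nonneg (by norm_num) p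
    have h3 : (0:ℝ) ≤ C₁ * (2 ^ p * (1 + Iφ)) :=
      mul_nonneg hC₁0 (mul_nonneg h2p (by linarith))
    rw [hM]; linarith
  have hMev : ∀ᶠ k in atTop,
      Qfun Ω V p (φk k) + ∫ x in Ω, V₁ x * |φk k x| ^ p ≤ M := by
    have hev1 : ∀ᶠ k in atTop, Qfun Ω V p (φk k) ≤ 1 :=
      (hQ0.eventually_lt_const (by norm_num : (0:ℝ) < 1)).mono fun k h => h.le
    have hev2 : ∀ᶠ k in atTop, ∫ x in S, |φk k x - φ x| ^ p ≤ 1 :=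
      ((hLp S hScpt hV₁sub).eventually_lt_const (by norm_num : (0:ℝ) < 1)).mono
        fun k h => h.le
    filter_upwards [hev1, hev2] with k h1 h2
    have intk : IntegrableOn (fun x => |φk k x| ^ p) S :=
      (contabs (φk k) S (hφkc k).continuousOn).integrableOn_compact hScpt
    have intφ : IntegrableOn (fun x => |φ x| ^ p) S :=
      (contabs φ S (hφcont.mono hV₁sub)).integrableOn_compact hScpt
    -- pointwise bound for |φk|^p
    have hpw : ∀ x, |φk k x| ^ p ≤ 2 ^ p * (|φk k x - φ x| ^ p + |φ x| ^ p) := by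
      intro x
      have h1' : |φk k x| ≤ |φk k x - φ x| + |φ x| := by
        calc |φk k x| = |(φk k x - φ x) + φ x| := by ring_nf
          _ ≤ |φk k x - φ x| + |φ x| := abs_add_le _ _
      calc |φk k x| ^ p ≤ (|φk k x - φ x| + |φ x|) ^ p :=
            Real.rpow_le_rpow (abs_nonneg _) h1' hp0.le
        _ ≤ 2 ^ p * (|φk k x - φ x| ^ p + |φ x| ^ p) :=
            rpow_add_le (abs_nonneg _) (abs_nonneg _) hp0.le
    have hSk : ∫ x in S, |φk k x| ^ p ≤ 2 ^ p * (1 + Iφ) := by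
      have hle : ∫ x in S, |φk k x| ^ p ≤
          ∫ x in S, 2 ^ p * (|φk k x - φ x| ^ p + |φ x| ^ p) := by
        apply integral_mono_of_nonneg
        · exact Eventually.of_forall fun x => Real.rpow_nonneg (abs_nonneg _) p
        · exact (((intdiff k S hScpt hV₁sub).add intφ).const_mul _)
        · exact Eventually.of_forall fun x => hpw x
      have heq : ∫ x in S, 2 ^ p * (|φk k x - φ x| ^ p + |φ x| ^ p)
          = 2 ^ p * ((∫ x in S, |φk k x - φ x| ^ p) + Iφ) := by
        rw [integral_const_mul, integral_add (intdiff k S hScpt hV₁sub) intφ]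
      rw [heq] at hle
      have h2p : (0:ℝ) ≤ 2 ^ p := Real.rpow_nonneg (by norm_num) p
      nlinarith
    -- bound the V₁ term
    have hV₁term : ∫ x in Ω, V₁ x * |φk k x| ^ p ≤ C₁ * ∫ x in S, |φk k x| ^ p := by
      have hgint : Integrable (fun x => C₁ * S.indicator (fun y => |φk k y| ^ p) x)
          (volume.restrict Ω) := by
        have : Integrable (S.indicator fun y => |φk k y| ^ p) volume :=
          intk.integrable_indicator hSmeas
        exact (this.restrict (s := Ω)).const_mul _
      have hle : ∫ x in Ω, V₁ x * |φk k x| ^ p ≤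
          ∫ x in Ω, C₁ * S.indicator (fun y => |φk k y| ^ p) x := by
        apply integral_mono_of_nonneg
        · exact Eventually.of_forall fun x =>
            mul_nonneg (hV₁nn x) (Real.rpow_nonneg (abs_nonneg _) p)
        · exact hgint
        · apply Eventually.of_forall
          intro x
          dsimp only
          by_cases hx : x ∈ S
          · rw [Set.indicator_of_mem hx]
            apply mul_le_mul_of_nonneg_right _ (Real.rpow_nonneg (abs_nonneg _) p)
            exact le_trans (le_abs_self _) (le_trans (hC₀ x (hV₁sub hx)) (le_max_left _ _))
          · rw [Set.indicator_of_notMem hx]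
            rw [image_eq_zero_of_notMem_tsupport hx]

            simp
      have heq : ∫ x in Ω, C₁ * S.indicator (fun y => |φk k y| ^ p) x
          = C₁ * ∫ x in S, |φk k x| ^ p := by
        rw [integral_const_mul, integral_indicator hSmeas,
          Measure.restrict_restrict hSmeas, Set.inter_eq_self_of_subset_left hV₁sub]
      rw [heq] at hle
      exact hle
    calc Qfun Ω V p (φk k) + ∫ x in Ω, V₁ x * |φk k x| ^ p
        ≤ 1 + C₁ * ∫ x in S, |φk k x| ^ p := by linarith
      _ ≤ 1 + C₁ * (2 ^ p * (1 + Iφ)) := by nlinarith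
      _ = M := rfl
  -- Step C : eventual bound on the weighted integrals of φk
  have hnn : ∀ (u : Euc N → ℝ), ∀ᵐ x ∂(volume.restrict Ω), 0 ≤ W x * |u x| ^ q := by
    intro u
    rw [ae_restrict_iff' hΩo.measurableSet]
    exact ae_of_all _ fun x hx =>
      mul_nonneg (hWpos x hx).le (Real.rpow_nonneg (abs_nonneg _) q)
  set g : ℕ → Euc N → ENNReal := fun k x => ENNReal.ofReal (W x * |φk k x| ^ q) with hgdef
  set B₀ := (M / C) ^ (q / p) with hB₀
  have hXk0 : ∀ k, 0 ≤ ∫ x in Ω, W x * |φk k x| ^ q := fun k =>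
    setIntegral_nonneg hΩo.measurableSet fun x hx =>
      mul_nonneg (hWpos x hx).le (Real.rpow_nonneg (abs_nonneg _) q)
  have hXev : ∀ᶠ k in atTop, ∫ x in Ω, W x * |φk k x| ^ q ≤ B₀ := by
    filter_upwards [hMev] with k hk
    have h1 := hineq (φk k) (hφk k).1
    have h2 : (∫ x in Ω, W x * |φk k x| ^ q) ^ (p / q) ≤ M / C := by
      rw [le_div_iff₀ hC]
      nlinarith
    have h3 : ∫ x in Ω, W x * |φk k x| ^ q
        = ((∫ x in Ω, W x * |φk k x| ^ q) ^ (p / q)) ^ (q / p) := by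
      rw [← Real.rpow_mul (hXk0 k)]
      rw [show p / q * (q / p) = 1 by field_simp]
      rw [Real.rpow_one]
    rw [h3, hB₀]
    exact Real.rpow_le_rpow (Real.rpow_nonneg (hXk0 k) _) h2 (by positivity)
  -- Step D : integrability of the weighted integrands, lintegral version
  have hWkint : ∀ k, IntegrableOn (fun x => W x * |φk k x| ^ q) Ω := by
    intro k
    have hT : IsCompact (tsupport (φk k)) := (hφk k).1.2.1
    have hTΩ : tsupport (φk k) ⊆ Ω := (hφk k).1.2.2
    have hsupp : Function.support (fun x => W x * |φk k x| ^ q) ⊆ tsupport (φk k) := by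
      intro x hx
      by_contra hmem
      exact Function.mem_support.mp hx (by
        rw [image_eq_zero_of_notMem_tsupport hmem, abs_zero, Real.zero_rpow hqpos.ne',
          mul_zero])
    have hcont : ContinuousOn (fun x => W x * |φk k x| ^ q) (tsupport (φk k)) :=
      (hWc.mono hTΩ).mul (((hφkc k).continuousOn).abs.rpow_const fun x _ => Or.inr hqpos.le)
    have hint : IntegrableOn (fun x => W x * |φk k x| ^ q) (tsupport (φk k)) :=
      hcont.integrableOn_compact hT
    exact ((integrableOn_iff_integrable_of_support_subset hsupp).mp hint).integrableOn
  have hlintX : ∀ k, ∫⁻ x in Ω, g k x = ENNReal.ofReal (∫ x in Ω, W x * |φk k x| ^ q) :=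
    fun k => (ofReal_integral_eq_lintegral_ofReal (hWkint k) (hnn (φk k))).symm
  have hgev : ∀ᶠ k in atTop, ∫⁻ x in Ω, g k x ≤ ENNReal.ofReal B₀ := by
    filter_upwards [hXev] with k hk
    rw [hlintX k]
    exact ENNReal.ofReal_le_ofReal hk
  -- Step E : uniform bound for the ground state on compact subsets
  have hKbound : ∀ K : Set (Euc N), IsCompact K → K ⊆ Ω →
      ∫⁻ x in K, ENNReal.ofReal (W x * |φ x| ^ q) ≤ ENNReal.ofReal B₀ := by
    intro K hKc hKΩ
    have hKmeas : MeasurableSet K := hKc.isClosed.measurableSet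
    have htim : TendstoInMeasure (volume.restrict K) φk atTop φ := by
      apply tendstoInMeasure_of_int hp0
      · exact fun k => (contdiff k K hKΩ).aemeasurable hKmeas
      · exact fun k => intdiff k K hKc hKΩ
      · exact hLp K hKc hKΩ
    obtain ⟨ns, hns, hae⟩ := htim.exists_seq_tendsto_ae
    have hgm : ∀ j, AEMeasurable (fun x => g (ns j) x) (volume.restrict K) := by
      intro j
      exact ENNReal.measurable_ofReal.comp_aemeasurable
        (((hWc.mono hKΩ).mul (((hφkc (ns j)).continuousOn).abs.rpow_const
          fun x _ => Or.inr hqpos.le)).aemeasurable hKmeas)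
    have haelim : ∀ᵐ x ∂(volume.restrict K),
        ENNReal.ofReal (W x * |φ x| ^ q) = Filter.liminf (fun j => g (ns j) x) atTop := by
      filter_upwards [hae] with x hx
      have habs : Tendsto (fun j => |φk (ns j) x|) atTop (𝓝 |φ x|) :=
        (continuous_abs.tendsto _).comp hx
      have hr : Tendsto (fun j => |φk (ns j) x| ^ q) atTop (𝓝 (|φ x| ^ q)) :=
        (Real.continuousAt_rpow_const _ q (Or.inr hqpos.le)).tendsto.comp habs
      have hreal : Tendsto (fun j => W x * |φk (ns j) x| ^ q) atTop (𝓝 (W x * |φ x| ^ q)) :=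
        tendsto_const_nhds.mul hr
      have hcont : Tendsto (fun j => g (ns j) x) atTop
          (𝓝 (ENNReal.ofReal (W x * |φ x| ^ q))) :=
        (ENNReal.continuous_ofReal.tendsto _).comp hreal
      exact hcont.liminf_eq.symm
    calc ∫⁻ x in K, ENNReal.ofReal (W x * |φ x| ^ q)
        = ∫⁻ x in K, Filter.liminf (fun j => g (ns j) x) atTop := lintegral_congr_ae haelim
      _ ≤ Filter.liminf (fun j => ∫⁻ x in K, g (ns j) x) atTop := lintegral_liminf_le' hgm
      _ ≤ ENNReal.ofReal B₀ := by
          apply Filter.liminf_le_of_frequently_le'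
          apply Filter.Eventually.frequently
          filter_upwards [hns.tendsto_atTop.eventually hgev] with j hj
          exact le_trans (lintegral_mono_set hKΩ) hj
  -- Step F : conclude that φ is W-integrable, contradiction
  obtain ⟨K, hKc, hKΩ, hKmono, hKU⟩ := open_exhaustion hΩo
  set h : Euc N → ENNReal := fun x => ENNReal.ofReal (W x * |φ x| ^ q) with hhdef
  have hWφcont : ContinuousOn (fun x => W x * |φ x| ^ q) Ω :=
    hWc.mul (hφcont.abs.rpow_const fun x _ => Or.inr hqpos.le)
  have hham : AEMeasurable h (volume.restrict Ω) :=
    ENNReal.measurable_ofReal.comp_aemeasurable (hWφcont.aemeasurable hΩo.measurableSet)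
  have hmain : ∫⁻ x in Ω, h x ≤ ENNReal.ofReal B₀ := by
    have hiSup : ∀ᵐ x ∂(volume.restrict Ω), (⨆ n, (K n).indicator h x) = h x := by
      rw [ae_restrict_iff' hΩo.measurableSet]
      apply ae_of_all
      intro x hx
      obtain ⟨n, hn⟩ : ∃ n, x ∈ K n := Set.mem_iUnion.mp (hKU ▸ hx)
      apply le_antisymm
      · exact iSup_le fun n => Set.indicator_le_self _ _ x
      · refine le_trans ?_ (le_iSup _ n)
        rw [Set.indicator_of_mem hn]
    have hmeas_ind : ∀ n, AEMeasurable ((K n).indicator h) (volume.restrict Ω) :=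
      fun n => hham.indicator (hKc n).isClosed.measurableSet
    have hmono : ∀ᵐ x ∂(volume.restrict Ω), Monotone fun n => (K n).indicator h x :=
      ae_of_all _ fun x m n hmn =>
        Set.indicator_le_indicator_of_subset (hKmono hmn) (fun _ => zero_le) x
    calc ∫⁻ x in Ω, h x = ∫⁻ x in Ω, ⨆ n, (K n).indicator h x :=
          (lintegral_congr_ae hiSup).symm
      _ = ⨆ n, ∫⁻ x in Ω, (K n).indicator h x := lintegral_iSup' hmeas_ind hmono
      _ ≤ ENNReal.ofReal B₀ := by
          apply iSup_le
          intro n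
          rw [lintegral_indicator (hKc n).isClosed.measurableSet,
            Measure.restrict_restrict (hKc n).isClosed.measurableSet,
            Set.inter_eq_self_of_subset_left (hKΩ n)]
          exact hKbound (K n) (hKc n) (hKΩ n)
  apply hφW
  refine ⟨hWφcont.aestronglyMeasurable hΩo.measurableSet, ?_⟩
  rw [hasFiniteIntegral_iff_ofReal (hnn φ)]
  exact lt_of_le_of_lt hmain ENNReal.ofReal_lt_top
end
end

section
/- Let Ω ⊆ ℝ^N be a domain, 1 < p < N, and let Q(u) = ∫_Ω (|∇u|^p + V|u|^p) dx with V ∈ L^∞_loc(Ω) be nonnegative on C_0^∞(Ω). Suppose Q admits a ground state φ and W is a continuous positive function on Ω with φ ∉ L^{p*}(Ω, W dx). Then Q does not satisfy the HSMP inequality with weight W: for every ψ ∈ C_0^∞(Ω) and every constant C > 0 the inequality Q(u) + C|∫_Ω ψu dx|^p ≥ (∫_Ω W|u|^{p*} dx)^{p/p*} fails for some u ∈ C_0^∞(Ω). -/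
open MeasureTheory Filter Topology
open scoped ENNReal

noncomputable section

lemma rpow_add_le_aux {a b q : ℝ} (ha : 0 ≤ a) (hb : 0 ≤ b) (hq : 0 ≤ q) :
    (a + b) ^ q ≤ 2 ^ q * (a ^ q + b ^ q) := by
  have h1 : a + b ≤ 2 * max a b := by
    rcases le_total a b with h | h
    · rw [max_eq_right h]; linarith
    · rw [max_eq_left h]; linarith
  have h2 : (max a b) ^ q ≤ a ^ q + b ^ q := by
    rcases le_total a b with h | h
    · rw [max_eq_right h]
      exact le_add_of_nonneg_left (Real.rpow_nonneg ha q)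
    · rw [max_eq_left h]
      exact le_add_of_nonneg_right (Real.rpow_nonneg hb q)
  calc (a + b) ^ q ≤ (2 * max a b) ^ q :=
        Real.rpow_le_rpow (by positivity) h1 hq
    _ = 2 ^ q * (max a b) ^ q :=
        Real.mul_rpow (by norm_num) (le_max_iff.2 (Or.inl ha))
    _ ≤ 2 ^ q * (a ^ q + b ^ q) := by
        have : (0:ℝ) ≤ 2 ^ q := Real.rpow_nonneg (by norm_num) q
        nlinarith

lemma exists_compact_integral_gt {N : ℕ} {Ω : Set (Euc N)} (hΩo : IsOpen Ω)
    {g : Euc N → ℝ} (hg : ContinuousOn g Ω) (hg0 : ∀ x ∈ Ω, 0 ≤ g x)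
    (hni : ¬ IntegrableOn g Ω) (L : ℝ) :
    ∃ K : Set (Euc N), IsCompact K ∧ K ⊆ Ω ∧ L < ∫ x in K, g x := by
  by_contra hcon
  push_neg at hcon
  apply hni
  obtain ⟨F, hFc, hFΩ, hFU, hFm⟩ := hΩo.exists_iUnion_isClosed
  set K : ℕ → Set (Euc N) := fun n => F n ∩ Metric.closedBall 0 n with hKdef
  have hKcomp : ∀ n, IsCompact (K n) := fun n =>
    (isCompact_closedBall 0 n).inter_left (hFc n)
  have hKΩ : ∀ n, K n ⊆ Ω := fun n => Set.inter_subset_left.trans (hFΩ n)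
  have hKmono : Monotone K := fun m n hmn =>
    Set.inter_subset_inter (hFm hmn)
      (Metric.closedBall_subset_closedBall (by exact_mod_cast hmn))
  have hKU : ∀ x ∈ Ω, ∃ n, x ∈ K n := by
    intro x hx
    have hx' : x ∈ ⋃ n, F n := hFU ▸ hx
    obtain ⟨m, hm⟩ := Set.mem_iUnion.1 hx'
    obtain ⟨n₀, hn₀⟩ := exists_nat_ge (dist x 0)
    refine ⟨max m n₀, Set.mem_inter (hFm (le_max_left _ _) hm) ?_⟩
    exact Metric.mem_closedBall.2 (hn₀.trans (by exact_mod_cast le_max_right m n₀))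
  have hgm : AEMeasurable g (volume.restrict Ω) := hg.aemeasurable hΩo.measurableSet
  set h : Euc N → ℝ≥0∞ := fun x => ENNReal.ofReal (g x) with hh
  have hhm : AEMeasurable h (volume.restrict Ω) := hgm.ennreal_ofReal
  have hgnn : 0 ≤ᵐ[volume.restrict Ω] g := by
    filter_upwards [ae_restrict_mem hΩo.measurableSet] with x hx using hg0 x hx
  have hieq : Ω.indicator h = fun x => ⨆ n, (K n).indicator h x := by
    funext x
    by_cases hx : x ∈ Ω
    · rw [Set.indicator_of_mem hx]
      refine le_antisymm ?_ ?_
      · obtain ⟨n, hn⟩ := hKU x hx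
        exact le_iSup_of_le n (le_of_eq (Set.indicator_of_mem hn h).symm)
      · refine iSup_le fun n => ?_
        by_cases hxn : x ∈ K n
        · rw [Set.indicator_of_mem hxn]
        · rw [Set.indicator_of_notMem hxn]; exact zero_le
    · rw [Set.indicator_of_notMem hx]
      symm
      rw [ENNReal.iSup_eq_zero]
      exact fun n => Set.indicator_of_notMem (fun hxn => hx (hKΩ n hxn)) h
  have key : ∫⁻ x in Ω, h x ≤ ENNReal.ofReal L := by
    have h1 : ∫⁻ x, Ω.indicator h x = ⨆ n, ∫⁻ x, (K n).indicator h x := by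
      rw [hieq]
      refine lintegral_iSup' (fun n => ?_) (ae_of_all _ fun x a b hab => ?_)
      · exact (aemeasurable_indicator_iff (hKcomp n).measurableSet).2
          (hhm.mono_measure (Measure.restrict_mono (hKΩ n) le_rfl))
      · exact Set.indicator_le_indicator_of_subset (hKmono hab) (fun _ => zero_le) x
    have h2 : ∀ n, ∫⁻ x, (K n).indicator h x ≤ ENNReal.ofReal L := by
      intro n
      rw [lintegral_indicator (hKcomp n).measurableSet]
      have hint : IntegrableOn g (K n) := (hg.mono (hKΩ n)).integrableOn_compact (hKcomp n)
      have hnn : 0 ≤ᵐ[volume.restrict (K n)] g := by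
        filter_upwards [ae_restrict_mem (hKcomp n).measurableSet] with x hx
          using hg0 x (hKΩ n hx)
      rw [← ofReal_integral_eq_lintegral_ofReal hint hnn]
      exact ENNReal.ofReal_le_ofReal (hcon (K n) (hKcomp n) (hKΩ n))
    rw [← lintegral_indicator hΩo.measurableSet, h1]
    exact iSup_le h2
  refine ⟨hg.aestronglyMeasurable hΩo.measurableSet, ?_⟩
  rw [hasFiniteIntegral_iff_ofReal hgnn]
  exact lt_of_le_of_lt key ENNReal.ofReal_lt_top

/-- Example 2.5 and Remark 2.6, HSMP version: if the nonnegative functional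
`Q` admits a ground state `φ` and `W` is a continuous positive function on `Ω` with
`φ ∉ L^{p*}(Ω, W dx)`, then `Q` does not satisfy the HSMP inequality with weight `W`: for every
`ψ ∈ C_0^∞(Ω)` and every `C > 0` the inequality
`Q(u) + C|∫_Ω ψu dx|^p ≥ (∫_Ω W|u|^{p*} dx)^{p/p*}` fails for some `u ∈ C_0^∞(Ω)`. -/
theorem statement_10 {N : ℕ} (Ω : Set (Euc N)) (hΩo : IsOpen Ω) (hΩc : IsConnected Ω)
    (V : Euc N → ℝ) (hV : LocBdd Ω V) (p : ℝ) (hp1 : 1 < p) (hpN : p < N)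
    (hQ : ∀ u : Euc N → ℝ, TestFun Ω u → 0 ≤ Qfun Ω V p u)
    (φ : Euc N → ℝ) (hφ : IsGroundState Ω V p φ)
    (W : Euc N → ℝ) (hWc : ContinuousOn W Ω) (hWpos : ∀ x ∈ Ω, 0 < W x)
    (hφW : ¬ IntegrableOn (fun x => W x * |φ x| ^ pStar p N) Ω) :
    ∀ ψ : Euc N → ℝ, TestFun Ω ψ → ∀ C : ℝ, 0 < C →
      ∃ u : Euc N → ℝ, TestFun Ω u ∧
        Qfun Ω V p u + C * |∫ x in Ω, ψ x * u x| ^ p <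
          (∫ x in Ω, W x * |u x| ^ pStar p N) ^ (p / pStar p N) := by
  intro ψ hψ C hC
  obtain ⟨hφC1, φk, B, hBo, hBne, hBcc, hBΩ, hφktest, hQtend, hφknorm, hconv⟩ := hφ
  have hp0 : (0:ℝ) < p := lt_trans one_pos hp1
  have hNp : 0 < (N:ℝ) - p := by linarith
  set q := pStar p N with hqdef
  have hpq : p < q := by
    have h1 : (1:ℝ) < (N:ℝ)/((N:ℝ)-p) := (one_lt_div hNp).2 (by linarith)
    have h2 : q = p * ((N:ℝ)/((N:ℝ)-p)) := by rw [hqdef, pStar]; ring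
    nlinarith
  have hq1 : (1:ℝ) < q := hp1.trans hpq
  have hq0 : (0:ℝ) < q := by linarith
  -- continuity helpers
  have hφc : ContinuousOn φ Ω := hφC1.continuousOn
  have habs : ∀ (f : Euc N → ℝ) (r : ℝ), 0 ≤ r → ContinuousOn f Ω →
      ContinuousOn (fun x => |f x| ^ r) Ω := fun f r hr hf =>
    hf.abs.rpow_const fun x _ => Or.inr hr
  have intOn : ∀ (f : Euc N → ℝ), ContinuousOn f Ω → ∀ K : Set (Euc N), IsCompact K → K ⊆ Ω →
      IntegrableOn f K := fun f hf K hK hKs => (hf.mono hKs).integrableOn_compact hK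
  set g : Euc N → ℝ := fun x => W x * |φ x| ^ q with hgdef
  have hgc : ContinuousOn g Ω := hWc.mul (habs φ q hq0.le hφc)
  have hg0 : ∀ x ∈ Ω, 0 ≤ g x := fun x hx =>
    mul_nonneg (hWpos x hx).le (Real.rpow_nonneg (abs_nonneg _) q)
  -- the support of ψ and associated constants
  set Kψ : Set (Euc N) := tsupport ψ with hKψdef
  have hKψc : IsCompact Kψ := hψ.2.1
  have hKψΩ : Kψ ⊆ Ω := hψ.2.2
  obtain ⟨C0, hC0⟩ := hKψc.exists_bound_of_continuousOn hψ.1.continuous.continuousOn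
  set Cψ : ℝ := max C0 0 with hCψdef
  have hCψ0 : 0 ≤ Cψ := le_max_right _ _
  set J : ℝ := ∫ x in Kψ, |φ x| ^ p with hJdef
  have hJ0 : 0 ≤ J := setIntegral_nonneg hKψc.measurableSet
    fun x _ => Real.rpow_nonneg (abs_nonneg _) p
  set B0 : ℝ := Cψ * ((volume Kψ).toReal + 2 ^ p * (1 + J)) with hB0def
  have hB00 : 0 ≤ B0 := by
    have h2p : (0:ℝ) ≤ 2 ^ p := Real.rpow_nonneg (by norm_num) p
    have := ENNReal.toReal_nonneg (a := volume Kψ)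
    positivity
  set M : ℝ := 1 + C * B0 ^ p with hMdef
  have hM0 : 0 < M := by
    have : 0 ≤ C * B0 ^ p := mul_nonneg hC.le (Real.rpow_nonneg hB00 p)
    rw [hMdef]; linarith
  set L : ℝ := (M + 1) ^ (q / p) with hLdef
  have hL0 : 0 ≤ L := Real.rpow_nonneg (by linarith) _
  set c : ℝ := (2:ℝ) ^ q with hcdef
  have hc1 : (1:ℝ) ≤ c := by
    calc (1:ℝ) = 1 ^ q := (Real.one_rpow q).symm
    _ ≤ 2 ^ q := Real.rpow_le_rpow zero_le_one one_le_two hq0.le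
  have hc0 : (0:ℝ) < c := by linarith
  -- choose a compact set with large weighted integral of |φ|^q
  obtain ⟨K, hKcp, hKΩ', hKg⟩ := exists_compact_integral_gt hΩo hgc hg0 hφW (c * (L + 3))
  -- constants attached to K
  obtain ⟨Mg0, hMg0⟩ := hKcp.exists_bound_of_continuousOn (hgc.mono hKΩ')
  set Mg : ℝ := max Mg0 0 with hMgdef
  have hMg0' : 0 ≤ Mg := le_max_right _ _
  have hMgK : ∀ x ∈ K, g x ≤ Mg := fun x hx =>
    (le_abs_self _).trans ((Real.norm_eq_abs (g x) ▸ hMg0 x hx).trans (le_max_left _ _))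
  set IW : ℝ := ∫ x in K, W x with hIWdef
  have hIW0 : 0 ≤ IW := setIntegral_nonneg hKcp.measurableSet
    fun x hx => (hWpos x (hKΩ' hx)).le
  set δ : ℝ := min 1 (1 / (IW + 1)) with hδdef
  have hδ0 : 0 < δ := lt_min one_pos (by positivity)
  have hδ1 : δ ≤ 1 := min_le_left _ _
  have hδp0 : (0:ℝ) < δ ^ p := Real.rpow_pos_of_pos hδ0 p
  have hδq : δ ^ q * IW ≤ 1 := by
    have h1 : δ ^ q ≤ δ := by
      have := Real.rpow_le_rpow_of_exponent_ge hδ0 hδ1 hq1.le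
      rwa [Real.rpow_one] at this
    have h2 : δ ≤ 1 / (IW + 1) := min_le_right _ _
    have h3 : δ ^ q * IW ≤ (1 / (IW + 1)) * IW :=
      mul_le_mul_of_nonneg_right (h1.trans h2) hIW0
    have h4 : (1 / (IW + 1)) * IW ≤ 1 := by
      rw [div_mul_eq_mul_div, one_mul, div_le_one (by positivity)]; linarith
    linarith
  set ε : ℝ := δ ^ p / (Mg + 1) with hεdef
  have hε0 : 0 < ε := div_pos hδp0 (by linarith)
  -- pick a good index
  have hE1 : ∀ᶠ k in atTop, Qfun Ω V p (φk k) ≤ 1 :=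
    hQtend.eventually (eventually_le_nhds one_pos)
  have hE2 : ∀ᶠ k in atTop, (∫ x in Kψ, |φk k x - φ x| ^ p) ≤ 1 :=
    (hconv Kψ hKψc hKψΩ).eventually (eventually_le_nhds one_pos)
  have hE3 : ∀ᶠ k in atTop, (∫ x in K, |φk k x - φ x| ^ p) ≤ ε :=
    (hconv K hKcp hKΩ').eventually (eventually_le_nhds hε0)
  obtain ⟨m, ⟨hm1, hm2⟩, hm3⟩ := ((hE1.and hE2).and hE3).exists
  set u : Euc N → ℝ := φk m with hudef
  have hu : TestFun Ω u := (hφktest m).1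
  have huc : Continuous u := hu.1.continuous
  refine ⟨u, hu, ?_⟩
  -- LHS bound
  have hLHS : Qfun Ω V p u + C * |∫ x in Ω, ψ x * u x| ^ p ≤ M := by
    have h2p : (0:ℝ) ≤ 2 ^ p := Real.rpow_nonneg (by norm_num) p
    have hf1 : IntegrableOn (fun x => |u x - φ x| ^ p) Kψ :=
      intOn _ (habs (fun x => u x - φ x) p hp0.le (huc.continuousOn.sub hφc)) Kψ hKψc hKψΩ
    have hf2 : IntegrableOn (fun x => |φ x| ^ p) Kψ :=
      intOn _ (habs φ p hp0.le hφc) Kψ hKψc hKψΩ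
    have hstep : |∫ x in Ω, ψ x * u x| ≤ B0 := by
      have heq : ∫ x in Ω, ψ x * u x = ∫ x in Kψ, ψ x * u x :=
        setIntegral_eq_of_subset_of_forall_diff_eq_zero hΩo.measurableSet hKψΩ
          (fun x hx => by rw [image_eq_zero_of_notMem_tsupport hx.2, zero_mul])
      have habs1 : |∫ x in Kψ, ψ x * u x| ≤ ∫ x in Kψ, |ψ x * u x| :=
        norm_integral_le_integral_norm (μ := volume.restrict Kψ) (fun x => ψ x * u x)
      have hint1 : IntegrableOn (fun x => |ψ x * u x|) Kψ :=
        intOn _ (hψ.1.continuous.mul huc).abs.continuousOn Kψ hKψc hKψΩ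
      have hmono : ∫ x in Kψ, |ψ x * u x|
          ≤ ∫ x in Kψ, Cψ * (1 + 2 ^ p * (|u x - φ x| ^ p + |φ x| ^ p)) := by
        refine setIntegral_mono_on hint1 ?_ hKψc.measurableSet ?_
        · exact ((integrableOn_const hKψc.measure_lt_top.ne).add
            ((hf1.add hf2).const_mul _)).const_mul _
        · intro x hx
          have h1 : |ψ x| ≤ Cψ := (Real.norm_eq_abs (ψ x) ▸ hC0 x hx).trans (le_max_left _ _)
          have h2 : |u x| ≤ 1 + |u x| ^ p := by
            rcases le_total (|u x|) 1 with h | h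
            · have := Real.rpow_nonneg (abs_nonneg (u x)) p; linarith
            · have h3 : |u x| ^ (1:ℝ) ≤ |u x| ^ p := Real.rpow_le_rpow_of_exponent_le h hp1.le
              rw [Real.rpow_one] at h3; linarith
          have h3 : |u x| ^ p ≤ 2 ^ p * (|u x - φ x| ^ p + |φ x| ^ p) := by
            have h4 : |u x| ≤ |u x - φ x| + |φ x| := by
              calc |u x| = |(u x - φ x) + φ x| := by ring_nf
                _ ≤ |u x - φ x| + |φ x| := abs_add_le _ _
            calc |u x| ^ p ≤ (|u x - φ x| + |φ x|) ^ p :=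
                  Real.rpow_le_rpow (abs_nonneg _) h4 hp0.le
              _ ≤ 2 ^ p * (|u x - φ x| ^ p + |φ x| ^ p) :=
                  rpow_add_le_aux (abs_nonneg _) (abs_nonneg _) hp0.le
          have h5 : |u x| ≤ 1 + 2 ^ p * (|u x - φ x| ^ p + |φ x| ^ p) := by linarith
          have h6 : (0:ℝ) ≤ |u x| := abs_nonneg _
          rw [abs_mul]
          exact mul_le_mul h1 h5 h6 hCψ0
      have hval : ∫ x in Kψ, Cψ * (1 + 2 ^ p * (|u x - φ x| ^ p + |φ x| ^ p))
          = Cψ * ((volume Kψ).toReal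
              + 2 ^ p * ((∫ x in Kψ, |u x - φ x| ^ p) + J)) := by
        have e1 : ∫ x in Kψ, ((1:ℝ) + 2 ^ p * (|u x - φ x| ^ p + |φ x| ^ p))
            = (∫ _x in Kψ, (1:ℝ)) + ∫ x in Kψ, 2 ^ p * (|u x - φ x| ^ p + |φ x| ^ p) :=
          integral_add (by exact integrableOn_const hKψc.measure_lt_top.ne)
            (by exact (hf1.add hf2).const_mul _)
        have e2 : ∫ x in Kψ, 2 ^ p * (|u x - φ x| ^ p + |φ x| ^ p)
            = 2 ^ p * ∫ x in Kψ, (|u x - φ x| ^ p + |φ x| ^ p) := integral_const_mul _ _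
        have e3 : ∫ x in Kψ, (|u x - φ x| ^ p + |φ x| ^ p)
            = (∫ x in Kψ, |u x - φ x| ^ p) + ∫ x in Kψ, |φ x| ^ p :=
          integral_add (by exact hf1) (by exact hf2)
        have e4 : ∫ _x in Kψ, (1:ℝ) = (volume Kψ).toReal := by
          simp [setIntegral_const]; rfl
        rw [integral_const_mul, e1, e2, e3, e4]
      have hfinal : Cψ * ((volume Kψ).toReal
          + 2 ^ p * ((∫ x in Kψ, |u x - φ x| ^ p) + J)) ≤ B0 := by
        rw [hB0def]
        refine mul_le_mul_of_nonneg_left ?_ hCψ0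
        have := mul_le_mul_of_nonneg_left hm2 h2p
        linarith
      rw [heq]
      linarith
    have h6 : C * |∫ x in Ω, ψ x * u x| ^ p ≤ C * B0 ^ p :=
      mul_le_mul_of_nonneg_left (Real.rpow_le_rpow (abs_nonneg _) hstep hp0.le) hC.le
    rw [hMdef]; linarith
  -- RHS bound
  have hRHS : L ≤ ∫ x in Ω, W x * |u x| ^ q := by
    have hintg : IntegrableOn g K := intOn _ hgc K hKcp hKΩ'
    have hintW : IntegrableOn W K := intOn _ hWc K hKcp hKΩ'
    have hintd : IntegrableOn (fun x => |u x - φ x| ^ p) K :=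
      intOn _ (habs (fun x => u x - φ x) p hp0.le (huc.continuousOn.sub hφc)) K hKcp hKΩ'
    have hintWu : IntegrableOn (fun x => W x * |u x| ^ q) K :=
      intOn _ (hWc.mul (habs u q hq0.le huc.continuousOn)) K hKcp hKΩ'
    have hpoint : ∀ x ∈ K,
        g x / c - δ ^ q * W x - (Mg / δ ^ p) * |u x - φ x| ^ p ≤ W x * |u x| ^ q := by
      intro x hx
      have hWx : 0 ≤ W x := (hWpos x (hKΩ' hx)).le
      have hgx : 0 ≤ g x := hg0 x (hKΩ' hx)
      have hA : 0 ≤ W x * |u x| ^ q := mul_nonneg hWx (Real.rpow_nonneg (abs_nonneg _) q)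
      rcases le_total (|u x - φ x|) δ with h | h
      · have h4 : |φ x| ≤ |u x| + δ := by
          have h4a : |φ x| ≤ |u x| + |u x - φ x| := by
            calc |φ x| = |u x + (φ x - u x)| := by ring_nf
              _ ≤ |u x| + |φ x - u x| := abs_add_le _ _
              _ = |u x| + |u x - φ x| := by rw [abs_sub_comm]
          linarith
        have h5 : |φ x| ^ q ≤ c * (|u x| ^ q + δ ^ q) := by
          calc |φ x| ^ q ≤ (|u x| + δ) ^ q := Real.rpow_le_rpow (abs_nonneg _) h4 hq0.le
            _ ≤ 2 ^ q * (|u x| ^ q + δ ^ q) :=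
                rpow_add_le_aux (abs_nonneg _) hδ0.le hq0.le
        have h6 : g x ≤ (W x * |u x| ^ q + δ ^ q * W x) * c := by
          calc g x = W x * |φ x| ^ q := rfl
            _ ≤ W x * (c * (|u x| ^ q + δ ^ q)) := mul_le_mul_of_nonneg_left h5 hWx
            _ = (W x * |u x| ^ q + δ ^ q * W x) * c := by ring
        have h7 : g x / c ≤ W x * |u x| ^ q + δ ^ q * W x := (div_le_iff₀ hc0).2 h6
        have h8 : 0 ≤ (Mg / δ ^ p) * |u x - φ x| ^ p :=
          mul_nonneg (div_nonneg hMg0' hδp0.le) (Real.rpow_nonneg (abs_nonneg _) p)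
        linarith
      · have h4 : δ ^ p ≤ |u x - φ x| ^ p := Real.rpow_le_rpow hδ0.le h hp0.le
        have h5 : Mg ≤ (Mg / δ ^ p) * |u x - φ x| ^ p := by
          have h5a := mul_le_mul_of_nonneg_left h4 (div_nonneg hMg0' hδp0.le)
          rw [div_mul_cancel₀ _ hδp0.ne'] at h5a
          exact h5a
        have h6 : g x / c ≤ Mg := (div_le_self hgx hc1).trans (hMgK x hx)
        have h7 : 0 ≤ δ ^ q * W x := mul_nonneg (Real.rpow_nonneg hδ0.le q) hWx
        linarith
    have hKint : (∫ x in K, g x) / c - δ ^ q * IW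
        - (Mg / δ ^ p) * (∫ x in K, |u x - φ x| ^ p) ≤ ∫ x in K, W x * |u x| ^ q := by
      have hleft : IntegrableOn
          (fun x => g x / c - δ ^ q * W x - (Mg / δ ^ p) * |u x - φ x| ^ p) K :=
        ((hintg.div_const c).sub (hintW.const_mul _)).sub (hintd.const_mul _)
      have hmm := setIntegral_mono_on hleft hintWu hKcp.measurableSet hpoint
      have e1 : ∫ x in K, (g x / c - δ ^ q * W x - Mg / δ ^ p * |u x - φ x| ^ p)
          = (∫ x in K, (g x / c - δ ^ q * W x)) - ∫ x in K, Mg / δ ^ p * |u x - φ x| ^ p :=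
        integral_sub (by exact (hintg.div_const c).sub (hintW.const_mul _))
          (by exact hintd.const_mul _)
      have e2 : ∫ x in K, (g x / c - δ ^ q * W x)
          = (∫ x in K, g x / c) - ∫ x in K, δ ^ q * W x :=
        integral_sub (by exact hintg.div_const c) (by exact hintW.const_mul _)
      have e3 : ∫ x in K, g x / c = (∫ x in K, g x) / c := integral_div _ _
      have e4 : ∫ x in K, δ ^ q * W x = δ ^ q * IW := integral_const_mul _ _
      have e5 : ∫ x in K, Mg / δ ^ p * |u x - φ x| ^ p
          = Mg / δ ^ p * ∫ x in K, |u x - φ x| ^ p := integral_const_mul _ _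
      rw [e1, e2, e3, e4, e5] at hmm
      exact hmm
    have hn1 : L + 3 < (∫ x in K, g x) / c := by
      rw [lt_div_iff₀ hc0, mul_comm]; exact hKg
    have hn2 : (Mg / δ ^ p) * (∫ x in K, |u x - φ x| ^ p) ≤ 1 := by
      have h1 : (Mg / δ ^ p) * (∫ x in K, |u x - φ x| ^ p) ≤ (Mg / δ ^ p) * ε :=
        mul_le_mul_of_nonneg_left hm3 (div_nonneg hMg0' hδp0.le)
      have h2 : (Mg / δ ^ p) * ε = Mg / (Mg + 1) := by
        rw [hεdef]
        field_simp
      have h3 : Mg / (Mg + 1) ≤ 1 := by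
        rw [div_le_one (by linarith)]; linarith
      linarith
    have hKlow : L + 1 ≤ ∫ x in K, W x * |u x| ^ q := by linarith
    have hintΩ : IntegrableOn (fun x => W x * |u x| ^ q) Ω := by
      have hKu : IsCompact (tsupport u) := hu.2.1
      have h0 : ∀ x ∈ Ω \ tsupport u, W x * |u x| ^ q = 0 := fun x hx => by
        rw [image_eq_zero_of_notMem_tsupport hx.2, abs_zero, Real.zero_rpow hq0.ne', mul_zero]
      have hcst : IntegrableOn (fun x => W x * |u x| ^ q) (tsupport u) :=
        intOn _ (hWc.mul (habs u q hq0.le huc.continuousOn)) _ hKu hu.2.2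
      have hrest : IntegrableOn (fun x => W x * |u x| ^ q) (Ω \ tsupport u) :=
        (integrableOn_zero).congr_fun (fun x hx => (h0 x hx).symm)
          (hΩo.measurableSet.diff (isClosed_tsupport u).measurableSet)
      refine (hcst.union hrest).mono_set fun x hx => ?_
      by_cases h : x ∈ tsupport u
      · exact Or.inl h
      · exact Or.inr ⟨hx, h⟩
    have hmono2 : ∫ x in K, W x * |u x| ^ q ≤ ∫ x in Ω, W x * |u x| ^ q := by
      refine setIntegral_mono_set hintΩ ?_ (HasSubset.Subset.eventuallyLE hKΩ')
      filter_upwards [ae_restrict_mem hΩo.measurableSet] with x hx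
        using mul_nonneg (hWpos x hx).le (Real.rpow_nonneg (abs_nonneg _) q)
    linarith
  calc Qfun Ω V p u + C * |∫ x in Ω, ψ x * u x| ^ p ≤ M := hLHS
    _ < M + 1 := lt_add_one M
    _ = ((M + 1) ^ (q / p)) ^ (p / q) := by
        rw [← Real.rpow_mul (by linarith : (0:ℝ) ≤ M + 1),
          div_mul_div_comm, mul_comm q p, div_self (mul_pos hp0 hq0).ne', Real.rpow_one]
    _ ≤ (∫ x in Ω, W x * |u x| ^ q) ^ (p / q) :=
        Real.rpow_le_rpow hL0 hRHS (by positivity)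
end
end

section
/- Let p ≥ 2, let Ω ⊆ ℝ^N be a domain, and let v ∈ C¹(Ω) be a positive solution of −Δ_p(u) + V|u|^{p−2}u = 0 in Ω. Define for nonnegative w ∈ C_0^∞(Ω) the Lagrangian L_v(w) = |v∇w + w∇v|^p − w^p|∇v|^p − p w^{p−1} v |∇v|^{p−2} ∇v·∇w and the simplified Lagrangian L̂_v(w) = v^p|∇w|^p + v²|∇v|^{p−2} w^{p−2}|∇w|². Then there exists a constant c > 0 depending only on p such that c⁻¹ L̂_v(w) ≤ L_v(w) ≤ c L̂_v(w) pointwise in Ω for every nonnegative w ∈ C_0^∞(Ω). -/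
open MeasureTheory Filter Topology

noncomputable section

/-- `v` is a weak supersolution of the Euler-Lagrange equation
`Q'(u) = -Δ_p(u) + V|u|^{p-2}u = 0` in `Ω`. -/
def IsSupersolution {N : ℕ} (Ω : Set (Euc N)) (V : Euc N → ℝ) (p : ℝ) (v : Euc N → ℝ) : Prop :=
  ∀ ψ : Euc N → ℝ, TestFun Ω ψ → (∀ x, 0 ≤ ψ x) →
    0 ≤ ∫ x in Ω, (‖gradient v x‖ ^ (p - 2) * (inner ℝ (gradient v x) (gradient ψ x) : ℝ)
        + V x * |v x| ^ (p - 2) * v x * ψ x)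

/-- `v` is a weak solution of the Euler-Lagrange equation
`Q'(u) = -Δ_p(u) + V|u|^{p-2}u = 0` in `Ω`. -/
def IsSolution {N : ℕ} (Ω : Set (Euc N)) (V : Euc N → ℝ) (p : ℝ) (v : Euc N → ℝ) : Prop :=
  ∀ ψ : Euc N → ℝ, TestFun Ω ψ →
    (∫ x in Ω, (‖gradient v x‖ ^ (p - 2) * (inner ℝ (gradient v x) (gradient ψ x) : ℝ)
        + V x * |v x| ^ (p - 2) * v x * ψ x)) = 0

/-- The Lagrangian `L_v(w) = |v∇w + w∇v|^p - w^p|∇v|^p - p w^{p-1} v |∇v|^{p-2} ∇v·∇w`. -/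
def LagrL {N : ℕ} (p : ℝ) (v w : Euc N → ℝ) (x : Euc N) : ℝ :=
  ‖v x • gradient w x + w x • gradient v x‖ ^ p - w x ^ p * ‖gradient v x‖ ^ p -
    p * w x ^ (p - 1) * v x * ‖gradient v x‖ ^ (p - 2) *
      (inner ℝ (gradient v x) (gradient w x) : ℝ)

/-- The simplified Lagrangian `L̂_v(w) = v^p|∇w|^p + v²|∇v|^{p-2} w^{p-2}|∇w|²`. -/
def LagrLhat {N : ℕ} (p : ℝ) (v w : Euc N → ℝ) (x : Euc N) : ℝ :=
  v x ^ p * ‖gradient w x‖ ^ p +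
    v x ^ 2 * ‖gradient v x‖ ^ (p - 2) * w x ^ (p - 2) * ‖gradient w x‖ ^ 2


open Real in
lemma tangent_rpow {q x y : ℝ} (hq : 1 ≤ q) (hx : 0 ≤ x) (hy : 0 ≤ y) :
    y ^ q + q * y ^ (q - 1) * (x - y) ≤ x ^ q := by
  rcases eq_or_lt_of_le hy with h0 | hy'
  · subst h0
    rcases eq_or_lt_of_le hq with h1 | hq'
    · simp [← h1]
    · rw [Real.zero_rpow (by positivity), Real.zero_rpow (by linarith)]
      rw [zero_add, mul_zero, zero_mul]
      positivity
  · have hb := one_add_mul_self_le_rpow_one_add (s := x / y - 1) (by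
      have : 0 ≤ x / y := div_nonneg hx hy'.le; linarith) hq
    have h1 : (1 : ℝ) + (x / y - 1) = x / y := by ring
    rw [h1, Real.div_rpow hx hy'.le] at hb
    have hyq : (0:ℝ) < y ^ q := Real.rpow_pos_of_pos hy' q
    have := mul_le_mul_of_nonneg_left hb hyq.le
    rw [mul_div_cancel₀ _ (ne_of_gt hyq)] at this
    calc y ^ q + q * y ^ (q - 1) * (x - y)
        = y ^ q * (1 + q * (x / y - 1)) := by
          have hyne : y ≠ 0 := ne_of_gt hy'
          have : y ^ (q-1) = y ^ q / y := by
            rw [eq_div_iff hyne, ← Real.rpow_add_one hyne]; ring_nf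
          rw [this]; field_simp
      _ ≤ x ^ q := this

lemma sq_rpow {x : ℝ} (q : ℝ) (hx : 0 ≤ x) : (x ^ 2) ^ q = x ^ (2 * q) := by
  rw [← Real.rpow_natCast x 2, ← Real.rpow_mul hx]
  norm_num

lemma rpow_sub_mul {w p : ℝ} (hw : 0 ≤ w) (hp : 2 ≤ p) : w ^ (p - 2) * w = w ^ (p - 1) := by
  rcases eq_or_lt_of_le hw with h0 | hw'
  · rw [← h0, mul_zero, Real.zero_rpow (by linarith : p - 1 ≠ 0)]
  · rw [← Real.rpow_add_one (ne_of_gt hw') (p - 2)]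
    ring_nf

lemma rpow_sub_mul_sq {t p : ℝ} (ht : 0 ≤ t) (hp : 2 ≤ p) : t ^ (p - 2) * t ^ 2 = t ^ p := by
  rw [← Real.rpow_natCast t 2, show ((2:ℕ):ℝ) = 2 from by norm_num,
    ← Real.rpow_add' ht (by intro h; linarith : p - 2 + (2:ℝ) ≠ 0)]
  norm_num

lemma rpow_sub_one_mul {t p : ℝ} (ht : 0 ≤ t) (hp : 2 ≤ p) : t ^ (p - 1) * t = t ^ p := by
  rcases eq_or_lt_of_le ht with h0 | ht'
  · rw [← h0, mul_zero, Real.zero_rpow (by linarith)]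
  · rw [← Real.rpow_add_one (ne_of_gt ht') (p - 1)]; ring_nf

/-- Convexity in `r²`: `r^p - s^p - (p/2) s^{p-2} (r²-s²) ≥ 0`. -/
lemma L1 {p r s : ℝ} (hp : 2 ≤ p) (hr : 0 ≤ r) (hs : 0 ≤ s) :
    s ^ p + p / 2 * s ^ (p - 2) * (r ^ 2 - s ^ 2) ≤ r ^ p := by
  have h := tangent_rpow (q := p / 2) (x := r ^ 2) (y := s ^ 2)
    (by linarith) (by positivity) (by positivity)
  rw [sq_rpow (p/2) hr, sq_rpow (p/2) hs, sq_rpow (p/2 - 1) hs] at h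
  have e1 : 2 * (p / 2) = p := by ring
  have e2 : 2 * (p / 2 - 1) = p - 2 := by ring
  rw [e1, e2] at h
  linarith

lemma le_of_sq_le_sq'' {a b : ℝ} (ha : 0 ≤ a) (hb : 0 ≤ b) (h : a^2 ≤ b^2) : a ≤ b := by
  nlinarith [mul_self_nonneg (a - b), mul_self_nonneg (a + b)]

set_option maxHeartbeats 2000000 in
/-- Core scalar two-sided estimate. -/
lemma scalar_core (p : ℝ) (hp : 2 ≤ p) :
    ∃ c : ℝ, 0 < c ∧ ∀ s t θ r : ℝ, 0 ≤ s → 0 ≤ t → 0 ≤ r →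
      |θ| ≤ s * t → r ^ 2 = s ^ 2 + 2 * θ + t ^ 2 →
      c⁻¹ * (t ^ p + s ^ (p - 2) * t ^ 2) ≤ r ^ p - s ^ p - p * s ^ (p - 2) * θ ∧
      r ^ p - s ^ p - p * s ^ (p - 2) * θ ≤ c * (t ^ p + s ^ (p - 2) * t ^ 2) := by
  obtain ⟨ε, hεdef⟩ : ∃ ε : ℝ, ε = 1 / (4 * p + 2) := ⟨_, rfl⟩
  have hεpos : 0 < ε := by rw [hεdef]; positivity
  have hε1 : ε ≤ 1 / 10 := by
    rw [hεdef, div_le_div_iff₀ (by linarith) (by norm_num)]; linarith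
  obtain ⟨c₁, hc₁def⟩ : ∃ c₁ : ℝ, c₁ = min (p / 2 * ε ^ (p - 2)) (1 / 2) := ⟨_, rfl⟩
  have hεp2 : 0 < ε ^ (p - 2) := Real.rpow_pos_of_pos hεpos _
  have hc₁pos : 0 < c₁ := by
    rw [hc₁def]; apply lt_min (by positivity) (by norm_num)
  have hc₁le : c₁ ≤ 1 := by
    rw [hc₁def]; exact le_trans (min_le_right _ _) (by norm_num)
  obtain ⟨clo, hclodef⟩ : ∃ clo : ℝ, clo = c₁ / 2 := ⟨_, rfl⟩
  have hclopos : 0 < clo := by rw [hclodef]; linarith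
  have h2p : (0:ℝ) < 2 ^ (p - 2) := Real.rpow_pos_of_pos (by norm_num) _
  obtain ⟨C₂, hC₂def⟩ : ∃ C₂ : ℝ, C₂ = p * (p - 1) * 2 ^ (p - 2) + p * (p - 1) + p := ⟨_, rfl⟩
  have hp1 : (1:ℝ) ≤ p - 1 := by linarith
  have hC₂pos : 0 < C₂ := by
    rw [hC₂def]
    have h1 : (0:ℝ) < p * (p - 1) := by nlinarith
    nlinarith
  refine ⟨max C₂ clo⁻¹, lt_of_lt_of_le hC₂pos (le_max_left _ _), ?_⟩
  intro s t θ r hs ht hr hθ hr2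
  have hθ1 := (abs_le.mp hθ).1
  have hθ2 := (abs_le.mp hθ).2
  have hsp2 : (0:ℝ) ≤ s ^ (p - 2) := Real.rpow_nonneg hs _
  have htp : (0:ℝ) ≤ t ^ p := Real.rpow_nonneg ht _
  have ht2 : (0:ℝ) ≤ t ^ 2 := sq_nonneg t
  have hX : (0:ℝ) ≤ s ^ (p - 2) * t ^ 2 := mul_nonneg hsp2 ht2
  have hRHS : (0:ℝ) ≤ t ^ p + s ^ (p - 2) * t ^ 2 := by linarith
  -- basic geometry
  have hrst : r ≤ s + t := by
    apply le_of_sq_le_sq'' hr (by linarith); nlinarith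
  have htsr : t - s ≤ r := by
    rcases le_or_gt t s with h | h
    · linarith
    · exact le_of_sq_le_sq'' (by linarith) hr (by nlinarith)
  have hstr : s - r ≤ t := by
    rcases le_or_gt s r with h | h
    · linarith
    · have : s - r ≤ t ↔ s - t ≤ r := by constructor <;> intro <;> linarith
      rw [this]
      rcases le_or_gt s t with h2 | h2
      · linarith
      · exact le_of_sq_le_sq'' (by linarith) hr (by nlinarith)
  -- θ in terms of r,s,t
  have hθeq : p * s ^ (p - 2) * θ
      = p / 2 * s ^ (p - 2) * (r ^ 2 - s ^ 2) - p / 2 * s ^ (p - 2) * t ^ 2 := by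
    linear_combination (-(p / 2) * s ^ (p - 2)) * hr2
  obtain ⟨f, hfdef⟩ : ∃ f : ℝ, f = r ^ p - s ^ p - p * s ^ (p - 2) * θ := ⟨_, rfl⟩
  -- Lower bound piece 1 : f ≥ (p/2) s^{p-2} t²
  have hlow1 : p / 2 * (s ^ (p - 2) * t ^ 2) ≤ f := by
    have := L1 (r := r) (s := s) hp hr hs
    rw [hfdef, hθeq]; linarith
  have hlow1' : s ^ (p - 2) * t ^ 2 ≤ f := by
    have h := mul_le_mul_of_nonneg_right (show (1:ℝ) ≤ p/2 by linarith) hX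
    rw [one_mul] at h
    linarith
  -- Lower bound piece 2 : f ≥ c₁ t^p
  have hlow2 : c₁ * t ^ p ≤ f := by
    rcases le_or_gt (ε * t) s with hcase | hcase
    · have h1 : (ε * t) ^ (p - 2) ≤ s ^ (p - 2) :=
        Real.rpow_le_rpow (by positivity) hcase (by linarith)
      have h2 : (ε * t) ^ (p - 2) = ε ^ (p - 2) * t ^ (p - 2) :=
        Real.mul_rpow hεpos.le ht
      rw [h2] at h1
      have h3 : ε ^ (p-2) * t ^ (p-2) * t ^ 2 ≤ s ^ (p - 2) * t ^ 2 :=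
        mul_le_mul_of_nonneg_right h1 ht2
      have h4 : ε ^ (p-2) * t ^ (p-2) * t ^ 2 = ε ^ (p-2) * t ^ p := by
        rw [mul_assoc, rpow_sub_mul_sq ht hp]
      rw [h4] at h3
      have h5 : c₁ * t ^ p ≤ p / 2 * ε ^ (p - 2) * t ^ p := by
        apply mul_le_mul_of_nonneg_right _ htp
        rw [hc₁def]; exact min_le_left _ _
      calc c₁ * t ^ p ≤ p / 2 * ε ^ (p - 2) * t ^ p := h5
        _ = p / 2 * (ε ^ (p-2) * t ^ p) := by ring
        _ ≤ p / 2 * (s ^ (p - 2) * t ^ 2) := by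
            apply mul_le_mul_of_nonneg_left h3 (by linarith)
        _ ≤ f := hlow1
    · -- s < ε t
      have hεt : 0 ≤ (1 - ε) * t := mul_nonneg (by linarith) ht
      have hrge : (1 - ε) * t ≤ r := by
        have : ε * t ≤ 1 * t := mul_le_mul_of_nonneg_right (by linarith) ht
        nlinarith [hcase.le]
      have hrp : ((1 - ε) * t) ^ p ≤ r ^ p := Real.rpow_le_rpow hεt hrge (by linarith)
      rw [Real.mul_rpow (by linarith) ht] at hrp
      have hbern : 1 - p * ε ≤ (1 - ε) ^ p := by
        have h := one_add_mul_self_le_rpow_one_add (s := -ε) (by linarith) (by linarith : 1 ≤ p)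
        rw [show (1:ℝ) + -ε = 1 - ε by ring] at h
        linarith
      have hbern' : (1 - p * ε) * t ^ p ≤ (1 - ε) ^ p * t ^ p :=
        mul_le_mul_of_nonneg_right hbern htp
      -- s^p ≤ ε t^p
      have hsp : s ^ p ≤ ε * t ^ p := by
        calc s ^ p ≤ (ε * t) ^ p := Real.rpow_le_rpow hs hcase.le (by linarith)
          _ = ε ^ p * t ^ p := Real.mul_rpow hεpos.le ht
          _ ≤ ε * t ^ p := by
              apply mul_le_mul_of_nonneg_right _ htp
              have h := Real.rpow_le_rpow_of_exponent_ge hεpos (by linarith) (by linarith : (1:ℝ) ≤ p)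
              rwa [Real.rpow_one] at h
      -- cross term : p s^{p-2} θ ≤ p ε t^p
      have hcross : p * s ^ (p - 2) * θ ≤ p * ε * t ^ p := by
        have h1 : p * s ^ (p - 2) * θ ≤ p * (s ^ (p-2) * s) * t := by
          have h1a : s ^ (p-2) * θ ≤ s ^ (p-2) * (s*t) :=
            mul_le_mul_of_nonneg_left hθ2 hsp2
          have hpnn : (0:ℝ) ≤ p := by linarith
          calc p * s ^ (p-2) * θ = p * (s ^ (p-2) * θ) := by ring
            _ ≤ p * (s ^ (p-2) * (s*t)) := mul_le_mul_of_nonneg_left h1a hpnn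
            _ = p * (s ^ (p-2) * s) * t := by ring
        have h2 : s ^ (p-2) * s ≤ (ε*t) ^ (p-2) * (ε*t) := by
          apply mul_le_mul (Real.rpow_le_rpow hs hcase.le (by linarith)) hcase.le hs
            (Real.rpow_nonneg (by positivity) _)
        have h3 : (ε*t) ^ (p-2) * (ε*t) = (ε*t) ^ (p-1) := rpow_sub_mul (by positivity) hp
        have h4 : (ε*t) ^ (p-1) ≤ ε * t ^ (p-1) := by
          rw [Real.mul_rpow hεpos.le ht]
          apply mul_le_mul_of_nonneg_right _ (Real.rpow_nonneg ht _)
          have h := Real.rpow_le_rpow_of_exponent_ge hεpos (by linarith) (by linarith : (1:ℝ) ≤ p - 1)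
          rwa [Real.rpow_one] at h
        have h5 : s ^ (p-2) * s ≤ ε * t ^ (p-1) := by rw [← h3] at h4; linarith
        have h6 : (s ^ (p-2) * s) * t ≤ (ε * t ^ (p-1)) * t := mul_le_mul_of_nonneg_right h5 ht
        have h7 : (ε * t ^ (p-1)) * t = ε * t ^ p := by rw [mul_assoc, rpow_sub_one_mul ht hp]
        have hpnn : (0:ℝ) ≤ p := by linarith
        have h8 : p * ((s ^ (p-2) * s) * t) ≤ p * (ε * t ^ p) := by
          rw [← h7]; exact mul_le_mul_of_nonneg_left h6 hpnn
        calc p * s ^ (p-2) * θ ≤ p * (s ^ (p-2) * s) * t := h1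
          _ = p * ((s ^ (p-2) * s) * t) := by ring
          _ ≤ p * (ε * t ^ p) := h8
          _ = p * ε * t ^ p := by ring
      have hεval : (2*p+1) * ε = 1/2 := by
        rw [hεdef]; field_simp; ring
      have hkey : (1 - (2*p+1) * ε) * t ^ p ≤ f := by
        rw [hfdef]
        have expand : (1 - (2*p+1) * ε) * t ^ p
            = (1 - p*ε) * t ^ p - ε * t ^ p - p * ε * t ^ p := by ring
        rw [expand]
        linarith
      rw [hεval] at hkey
      have hc₁half : c₁ ≤ 1/2 := by rw [hc₁def]; exact min_le_right _ _
      have : c₁ * t ^ p ≤ 1/2 * t ^ p := mul_le_mul_of_nonneg_right hc₁half htp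
      calc c₁ * t ^ p ≤ 1/2 * t ^ p := this
        _ = (1 - 1/2) * t ^ p := by ring
        _ ≤ f := hkey
  constructor
  · -- lower bound
    have hinvle : (max C₂ clo⁻¹)⁻¹ ≤ clo := by
      have h1 : clo⁻¹ ≤ max C₂ clo⁻¹ := le_max_right _ _
      calc (max C₂ clo⁻¹)⁻¹ ≤ (clo⁻¹)⁻¹ := by
            apply inv_anti₀ (by positivity) h1
        _ = clo := inv_inv clo
    rw [← hfdef]
    calc (max C₂ clo⁻¹)⁻¹ * (t ^ p + s ^ (p - 2) * t ^ 2)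
        ≤ clo * (t ^ p + s ^ (p - 2) * t ^ 2) :=
          mul_le_mul_of_nonneg_right hinvle hRHS
      _ ≤ f := by
          have h1 : clo * (t ^ p + s ^ (p - 2) * t ^ 2)
              = c₁/2 * t ^ p + c₁/2 * (s ^ (p-2) * t ^ 2) := by rw [hclodef]; ring
          have h2 : c₁/2 * (s ^ (p-2) * t^2) ≤ 1/2 * (s ^ (p-2) * t^2) :=
            mul_le_mul_of_nonneg_right (by linarith) hX
          rw [h1]
          linarith
  · -- upper bound
    obtain ⟨D, hDdef⟩ : ∃ D : ℝ, D = r ^ p - s ^ p - p * s ^ (p - 1) * (r - s) := ⟨_, rfl⟩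
    have hs1 : s ^ (p - 2) * s = s ^ (p - 1) := rpow_sub_mul hs hp
    have hfD : f ≤ D + p / 2 * s ^ (p - 2) * t ^ 2 := by
      have heq : f = D - p/2 * s ^ (p-2) * (r-s)^2 + p/2 * s ^ (p-2) * t ^ 2 := by
        rw [hfdef, hDdef, hθeq, ← hs1]; ring
      have hA : (0:ℝ) ≤ p/2 * s ^ (p-2) * (r-s)^2 :=
        mul_nonneg (mul_nonneg (by linarith) hsp2) (sq_nonneg (r-s))
      linarith
    have hrs2 : (r - s)^2 ≤ t^2 := by
      have h := mul_nonneg (show (0:ℝ) ≤ t - (r-s) by linarith)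
        (show (0:ℝ) ≤ t + (r-s) by linarith)
      nlinarith [h]
    have hDbound : D ≤ p * (p-1) * 2 ^ (p-2) * (t ^ p + s ^ (p-2) * t^2)
        + p*(p-1) * (s ^ (p-2) * t^2) := by
      have hpp1 : (0:ℝ) ≤ p * (p-1) := by nlinarith
      have hterm1 : (0:ℝ) ≤ p * (p-1) * 2 ^ (p-2) * (t ^ p + s ^ (p-2) * t^2) := by
        apply mul_nonneg (mul_nonneg hpp1 h2p.le) hRHS
      rcases le_or_gt r s with hcase | hcase
      · have t1 := tangent_rpow (q := p) (x := s) (y := r) (by linarith) hs hr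
        have t2 := tangent_rpow (q := p-1) (x := r) (y := s) (by linarith) hr hs
        have hd1 : D ≤ p * (s - r) * (s ^ (p-1) - r ^ (p-1)) := by
          rw [hDdef]
          have hsub : p - 1 - 1 = p - 2 := by ring
          linarith
        have hd2 : s ^ (p-1) - r ^ (p-1) ≤ (p-1) * s ^ (p-1-1) * (s - r) := by linarith
        rw [show p - 1 - 1 = p - 2 by ring] at hd2
        have h6 : p * (s-r) * (s ^ (p-1) - r ^ (p-1))
            ≤ p * (s-r) * ((p-1) * s ^ (p-2) * (s - r)) := by
          apply mul_le_mul_of_nonneg_left hd2 (mul_nonneg (by linarith) (by linarith))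
        have hd3 : D ≤ p * (p-1) * s ^ (p-2) * (s-r)^2 := by
          calc D ≤ p * (s-r) * ((p-1) * s ^ (p-2) * (s - r)) := le_trans hd1 h6
            _ = p * (p-1) * s ^ (p-2) * (s-r)^2 := by ring
        have hd4 : p * (p-1) * s ^ (p-2) * (s-r)^2 ≤ p * (p-1) * s ^ (p-2) * t^2 := by
          apply mul_le_mul_of_nonneg_left _ (mul_nonneg hpp1 hsp2)
          calc (s-r)^2 = (r-s)^2 := by ring
            _ ≤ t^2 := hrs2
        calc D ≤ p * (p-1) * s ^ (p-2) * t^2 := le_trans hd3 hd4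
          _ = p*(p-1) * (s ^ (p-2) * t^2) := by ring
          _ ≤ _ := by linarith
      · have t1 := tangent_rpow (q := p) (x := s) (y := r) (by linarith) hs hr
        have t2 := tangent_rpow (q := p-1) (x := s) (y := r) (by linarith) hs hr
        have hrp2 : (0:ℝ) ≤ r ^ (p-2) := Real.rpow_nonneg hr _
        have hd1 : D ≤ p * (r - s) * (r ^ (p-1) - s ^ (p-1)) := by
          rw [hDdef]; linarith
        have hd2 : r ^ (p-1) - s ^ (p-1) ≤ (p-1) * r ^ (p-1-1) * (r - s) := by linarith
        rw [show p - 1 - 1 = p - 2 by ring] at hd2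
        have h6 : p * (r-s) * (r ^ (p-1) - s ^ (p-1))
            ≤ p * (r-s) * ((p-1) * r ^ (p-2) * (r - s)) := by
          apply mul_le_mul_of_nonneg_left hd2 (mul_nonneg (by linarith) (by linarith))
        have hd3 : D ≤ p * (p-1) * r ^ (p-2) * (r-s)^2 := by
          calc D ≤ p * (r-s) * ((p-1) * r ^ (p-2) * (r - s)) := le_trans hd1 h6
            _ = p * (p-1) * r ^ (p-2) * (r-s)^2 := by ring
        have hd4 : p * (p-1) * r ^ (p-2) * (r-s)^2 ≤ p * (p-1) * r ^ (p-2) * t^2 :=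
          mul_le_mul_of_nonneg_left hrs2 (mul_nonneg hpp1 hrp2)
        -- r^{p-2} ≤ 2^{p-2}(s^{p-2}+t^{p-2})
        have hmax : r ^ (p-2) ≤ 2 ^ (p-2) * (s ^ (p-2) + t ^ (p-2)) := by
          have h1 : r ≤ 2 * max s t := by
            have h1a := le_max_left s t; have h1b := le_max_right s t; linarith
          have h2 : r ^ (p-2) ≤ (2 * max s t) ^ (p-2) :=
            Real.rpow_le_rpow hr h1 (by linarith)
          have h3 : (2 * max s t) ^ (p-2) = 2 ^ (p-2) * (max s t) ^ (p-2) :=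
            Real.mul_rpow (by norm_num) (le_max_of_le_left hs)
          have h4 : (max s t) ^ (p-2) ≤ s ^ (p-2) + t ^ (p-2) := by
            rcases max_cases s t with ⟨he, _⟩ | ⟨he, _⟩ <;> rw [he]
            · linarith [Real.rpow_nonneg ht (p-2)]
            · linarith [Real.rpow_nonneg hs (p-2)]
          calc r ^ (p-2) ≤ (2 * max s t) ^ (p-2) := h2
            _ = 2 ^ (p-2) * (max s t) ^ (p-2) := h3
            _ ≤ 2 ^ (p-2) * (s ^ (p-2) + t ^ (p-2)) :=
                mul_le_mul_of_nonneg_left h4 h2p.le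
        have htp2 : t ^ (p-2) * t ^ 2 = t ^ p := rpow_sub_mul_sq ht hp
        have hd5 : p * (p-1) * r ^ (p-2) * t^2
            ≤ p * (p-1) * (2 ^ (p-2) * (s ^ (p-2) + t ^ (p-2))) * t^2 := by
          have hm := mul_le_mul_of_nonneg_right hmax ht2
          calc p * (p-1) * r ^ (p-2) * t^2 = p*(p-1) * (r ^ (p-2) * t^2) := by ring
            _ ≤ p*(p-1) * (2 ^ (p-2) * (s ^ (p-2) + t ^ (p-2)) * t^2) :=
                mul_le_mul_of_nonneg_left hm hpp1
            _ = p * (p-1) * (2 ^ (p-2) * (s ^ (p-2) + t ^ (p-2))) * t^2 := by ring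
        calc D ≤ p * (p-1) * (2 ^ (p-2) * (s ^ (p-2) + t ^ (p-2))) * t^2 := by linarith
          _ = p * (p-1) * 2 ^ (p-2) * (t ^ (p-2) * t^2 + s ^ (p-2) * t^2) := by ring
          _ = p * (p-1) * 2 ^ (p-2) * (t ^ p + s ^ (p-2) * t^2) := by rw [htp2]
          _ ≤ _ := by
              have : (0:ℝ) ≤ p*(p-1) * (s ^ (p-2) * t^2) := mul_nonneg hpp1 hX
              linarith
    have hfinal : f ≤ C₂ * (t ^ p + s ^ (p-2) * t^2) := by
      rw [hC₂def]
      have h1 : (0:ℝ) ≤ p * (p-1) * t^p := by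
        apply mul_nonneg (by nlinarith) htp
      have h2 : (0:ℝ) ≤ p/2 * (s ^ (p-2) * t^2) := by
        apply mul_nonneg (by linarith) hX
      have h3 : (0:ℝ) ≤ p * t^p := mul_nonneg (by linarith) htp
      nlinarith [hfD, hDbound, h1, h2, h3]
    rw [← hfdef]
    calc f ≤ C₂ * (t ^ p + s ^ (p-2) * t^2) := hfinal
      _ ≤ max C₂ clo⁻¹ * (t ^ p + s ^ (p-2) * t^2) :=
          mul_le_mul_of_nonneg_right (le_max_left _ _) hRHS

/-- Proposition 4.1, (4.4): for `p ≥ 2` there is `c > 0` depending only on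
`p` such that for every domain `Ω ⊆ ℝ^N`, every positive solution `v ∈ C¹(Ω)` of
`-Δ_p u + V|u|^{p-2}u = 0` in `Ω` and every nonnegative `w ∈ C_0^∞(Ω)`,
`c⁻¹ L̂_v(w) ≤ L_v(w) ≤ c L̂_v(w)` pointwise in `Ω`. -/
theorem statement_16 (p : ℝ) (hp2 : 2 ≤ p) :
    ∃ c : ℝ, 0 < c ∧
      ∀ (N : ℕ) (Ω : Set (Euc N)), IsOpen Ω → IsConnected Ω →
        ∀ V : Euc N → ℝ, LocBdd Ω V →
          ∀ v : Euc N → ℝ, ContDiffOn ℝ 1 v Ω → (∀ x ∈ Ω, 0 < v x) → IsSolution Ω V p v →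
            ∀ w : Euc N → ℝ, TestFun Ω w → (∀ x, 0 ≤ w x) →
              ∀ x ∈ Ω,
                c⁻¹ * LagrLhat p v w x ≤ LagrL p v w x ∧
                LagrL p v w x ≤ c * LagrLhat p v w x := by
  obtain ⟨c, hcpos, hcore⟩ := scalar_core p hp2
  refine ⟨c, hcpos, ?_⟩
  intro N Ω hΩo hΩc V hV v hv hvpos hsol w hw hwnn x hx
  have hvx : 0 < v x := hvpos x hx
  have hwx : 0 ≤ w x := hwnn x
  obtain ⟨a, hadef⟩ : ∃ a : Euc N, a = v x • gradient w x := ⟨_, rfl⟩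
  obtain ⟨b, hbdef⟩ : ∃ b : Euc N, b = w x • gradient v x := ⟨_, rfl⟩
  have hbnorm : ‖b‖ = w x * ‖gradient v x‖ := by
    rw [hbdef, norm_smul, Real.norm_eq_abs, abs_of_nonneg hwx]
  have hanorm : ‖a‖ = v x * ‖gradient w x‖ := by
    rw [hadef, norm_smul, Real.norm_eq_abs, abs_of_nonneg hvx.le]
  have hθ : |(inner ℝ b a : ℝ)| ≤ ‖b‖ * ‖a‖ := abs_real_inner_le_norm b a
  have hr2 : ‖a + b‖ ^ 2 = ‖b‖ ^ 2 + 2 * (inner ℝ b a : ℝ) + ‖a‖ ^ 2 := by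
    rw [norm_add_sq_real, real_inner_comm]; ring
  have key := hcore ‖b‖ ‖a‖ (inner ℝ b a : ℝ) ‖a + b‖ (norm_nonneg _) (norm_nonneg _)
    (norm_nonneg _) hθ hr2
  have e1 : ‖b‖ ^ p = w x ^ p * ‖gradient v x‖ ^ p := by
    rw [hbnorm, Real.mul_rpow hwx (norm_nonneg _)]
  have e2 : ‖b‖ ^ (p - 2) = w x ^ (p - 2) * ‖gradient v x‖ ^ (p - 2) := by
    rw [hbnorm, Real.mul_rpow hwx (norm_nonneg _)]
  have e3 : (inner ℝ b a : ℝ) = w x * (v x * (inner ℝ (gradient v x) (gradient w x) : ℝ)) := by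
    rw [hbdef, hadef, real_inner_smul_left, real_inner_smul_right]
  have e4 : w x ^ (p - 2) * w x = w x ^ (p - 1) := rpow_sub_mul hwx hp2
  have e5 : ‖a‖ ^ p = v x ^ p * ‖gradient w x‖ ^ p := by
    rw [hanorm, Real.mul_rpow hvx.le (norm_nonneg _)]
  have e6 : ‖a‖ ^ 2 = v x ^ 2 * ‖gradient w x‖ ^ 2 := by
    rw [hanorm, mul_pow]
  have hL : LagrL p v w x
      = ‖a + b‖ ^ p - ‖b‖ ^ p - p * ‖b‖ ^ (p - 2) * (inner ℝ b a : ℝ) := by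
    rw [LagrL, e1, e2, e3, ← e4, hadef, hbdef]
    ring
  have hLhat : LagrLhat p v w x = ‖a‖ ^ p + ‖b‖ ^ (p - 2) * ‖a‖ ^ 2 := by
    rw [LagrLhat, e2, e5, e6]
    ring
  rw [hL, hLhat]
  exact key
end
end

section
/- Let p ≥ 2, let w₀, w₁ be nonnegative C¹ functions on a domain Ω ⊆ ℝ^N, let t ∈ [0,1], and set w_t = ((1−t)w₀^{p/2} + t w₁^{p/2})^{2/p}. Then pointwise on the set where w_t is differentiable, |∇w_t|^{p/2} ≤ (1−t)|∇w₀|^{p/2} + t|∇w₁|^{p/2}; consequently also |∇w_t|^p ≤ (1−t)|∇w₀|^p + t|∇w₁|^p. -/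
open MeasureTheory Filter Topology

noncomputable section

-- per-term weighted AM-GM step
private lemma term_le {s X Y a A : ℝ} (hs : 1 < s) (hX : 0 < X) (hY : 0 < Y)
    (ha : 0 ≤ a) (hA : 0 ≤ A) :
    a ^ (s - 1) * A ≤
      ((s - 1) / s * (a ^ s / X) + 1 / s * (A ^ s / Y)) * (X ^ ((s - 1) / s) * Y ^ (1 / s)) := by
  have hs0 : (0 : ℝ) < s := by linarith
  have hw1 : (0 : ℝ) ≤ (s - 1) / s := div_nonneg (by linarith) hs0.le
  have hw2 : (0 : ℝ) ≤ 1 / s := by positivity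
  have h1 : a ^ (s - 1) = (a ^ s / X) ^ ((s - 1) / s) * X ^ ((s - 1) / s) := by
    rw [Real.div_rpow (Real.rpow_nonneg ha s) hX.le,
      div_mul_cancel₀ _ (ne_of_gt (Real.rpow_pos_of_pos hX _)),
      ← Real.rpow_mul ha, mul_div_cancel₀ _ hs0.ne']
  have h2 : A = (A ^ s / Y) ^ (1 / s) * Y ^ (1 / s) := by
    rw [Real.div_rpow (Real.rpow_nonneg hA s) hY.le,
      div_mul_cancel₀ _ (ne_of_gt (Real.rpow_pos_of_pos hY _)),
      ← Real.rpow_mul hA, mul_one_div_cancel hs0.ne', Real.rpow_one]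
  have hgm := Real.geom_mean_le_arith_mean2_weighted hw1 hw2
    (by positivity : (0:ℝ) ≤ a ^ s / X) (by positivity : (0:ℝ) ≤ A ^ s / Y)
    (by field_simp; ring)
  calc a ^ (s - 1) * A
      = ((a ^ s / X) ^ ((s - 1) / s) * (A ^ s / Y) ^ (1 / s)) *
          (X ^ ((s - 1) / s) * Y ^ (1 / s)) := by
          conv_lhs => rw [h1, h2]
          ring
    _ ≤ ((s - 1) / s * (a ^ s / X) + 1 / s * (A ^ s / Y)) *
          (X ^ ((s - 1) / s) * Y ^ (1 / s)) := by
        apply mul_le_mul_of_nonneg_right hgm (by positivity)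

private lemma holder_two {s τ a b A B : ℝ} (hs : 1 ≤ s) (hτ0 : 0 ≤ τ) (hτ1 : τ ≤ 1)
    (ha : 0 ≤ a) (hb : 0 ≤ b) (hA : 0 ≤ A) (hB : 0 ≤ B) :
    (1 - τ) * a ^ (s - 1) * A + τ * b ^ (s - 1) * B ≤
      ((1 - τ) * a ^ s + τ * b ^ s) ^ ((s - 1) / s) *
        ((1 - τ) * A ^ s + τ * B ^ s) ^ (1 / s) := by
  have h1τ : 0 ≤ 1 - τ := by linarith
  rcases eq_or_lt_of_le hs with h | h
  · subst h
    simp only [sub_self, Real.rpow_zero, Real.rpow_one, zero_div, mul_one, one_mul]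
    rw [div_self (by norm_num : (1:ℝ) ≠ 0), Real.rpow_one]
  · have hs0 : (0:ℝ) < s := by linarith
    set X := (1 - τ) * a ^ s + τ * b ^ s with hXdef
    set Y := (1 - τ) * A ^ s + τ * B ^ s with hYdef
    have hX0 : 0 ≤ X := by positivity
    have hY0 : 0 ≤ Y := by positivity
    rcases eq_or_lt_of_le hX0 with hX | hX
    · -- X = 0
      have h1 : (1 - τ) * a ^ s = 0 ∧ τ * b ^ s = 0 := by
        constructor <;> nlinarith [Real.rpow_nonneg ha s, Real.rpow_nonneg hb s]
      have ha' : (1 - τ) * a ^ (s - 1) * A = 0 := by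
        rcases mul_eq_zero.1 h1.1 with h' | h'
        · rw [h']; ring
        · have : a = 0 := (Real.rpow_eq_zero ha hs0.ne').1 h'
          rw [this, Real.zero_rpow (by linarith : s - 1 ≠ 0)]; ring
      have hb' : τ * b ^ (s - 1) * B = 0 := by
        rcases mul_eq_zero.1 h1.2 with h' | h'
        · rw [h']; ring
        · have : b = 0 := (Real.rpow_eq_zero hb hs0.ne').1 h'
          rw [this, Real.zero_rpow (by linarith : s - 1 ≠ 0)]; ring
      rw [ha', hb', add_zero]
      positivity
    rcases eq_or_lt_of_le hY0 with hY | hY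
    · -- Y = 0
      have h1 : (1 - τ) * A ^ s = 0 ∧ τ * B ^ s = 0 := by
        constructor <;> nlinarith [Real.rpow_nonneg hA s, Real.rpow_nonneg hB s]
      have ha' : (1 - τ) * a ^ (s - 1) * A = 0 := by
        rcases mul_eq_zero.1 h1.1 with h' | h'
        · rw [h']; ring
        · have : A = 0 := (Real.rpow_eq_zero hA hs0.ne').1 h'
          rw [this]; ring
      have hb' : τ * b ^ (s - 1) * B = 0 := by
        rcases mul_eq_zero.1 h1.2 with h' | h'
        · rw [h']; ring
        · have : B = 0 := (Real.rpow_eq_zero hB hs0.ne').1 h'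
          rw [this]; ring
      rw [ha', hb', add_zero]
      positivity
    · have t1 := term_le h hX hY ha hA
      have t2 := term_le h hX hY hb hB
      calc (1 - τ) * a ^ (s - 1) * A + τ * b ^ (s - 1) * B
          = (1 - τ) * (a ^ (s - 1) * A) + τ * (b ^ (s - 1) * B) := by ring
        _ ≤ (1 - τ) * (((s - 1) / s * (a ^ s / X) + 1 / s * (A ^ s / Y)) *
              (X ^ ((s - 1) / s) * Y ^ (1 / s))) +
            τ * (((s - 1) / s * (b ^ s / X) + 1 / s * (B ^ s / Y)) *
              (X ^ ((s - 1) / s) * Y ^ (1 / s))) := by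
            gcongr
        _ = ((s - 1) / s * (((1 - τ) * a ^ s + τ * b ^ s) / X) +
             1 / s * (((1 - τ) * A ^ s + τ * B ^ s) / Y)) *
              (X ^ ((s - 1) / s) * Y ^ (1 / s)) := by ring
        _ = X ^ ((s - 1) / s) * Y ^ (1 / s) := by
            rw [← hXdef, ← hYdef, div_self hX.ne', div_self hY.ne']
            field_simp
            ring

set_option maxHeartbeats 1600000 in
/-- inequalities (4.8) and following, in the proof of Proposition 4.2: for
`p ≥ 2`, nonnegative `C¹` functions `w₀, w₁` on a domain `Ω` and `t ∈ [0,1]`, setting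
`w_t = ((1-t)w₀^{p/2} + t w₁^{p/2})^{2/p}`, at every point of `Ω` where `w_t` is differentiable
one has `|∇w_t|^{p/2} ≤ (1-t)|∇w₀|^{p/2} + t|∇w₁|^{p/2}` and consequently
`|∇w_t|^p ≤ (1-t)|∇w₀|^p + t|∇w₁|^p`. -/
theorem statement_17 {N : ℕ} (p : ℝ) (hp2 : 2 ≤ p) (Ω : Set (Euc N)) (hΩo : IsOpen Ω)
    (hΩc : IsConnected Ω) (w₀ w₁ : Euc N → ℝ)
    (hw₀ : ContDiffOn ℝ 1 w₀ Ω) (hw₁ : ContDiffOn ℝ 1 w₁ Ω)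
    (hw₀n : ∀ x ∈ Ω, 0 ≤ w₀ x) (hw₁n : ∀ x ∈ Ω, 0 ≤ w₁ x)
    (t : ℝ) (ht : t ∈ Set.Icc (0 : ℝ) 1) :
    ∀ x ∈ Ω,
      DifferentiableAt ℝ (fun y => ((1 - t) * w₀ y ^ (p / 2) + t * w₁ y ^ (p / 2)) ^ (2 / p)) x →
      ‖gradient (fun y => ((1 - t) * w₀ y ^ (p / 2) + t * w₁ y ^ (p / 2)) ^ (2 / p)) x‖ ^ (p / 2)
          ≤ (1 - t) * ‖gradient w₀ x‖ ^ (p / 2) + t * ‖gradient w₁ x‖ ^ (p / 2) ∧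
      ‖gradient (fun y => ((1 - t) * w₀ y ^ (p / 2) + t * w₁ y ^ (p / 2)) ^ (2 / p)) x‖ ^ p
          ≤ (1 - t) * ‖gradient w₀ x‖ ^ p + t * ‖gradient w₁ x‖ ^ p := by
  intro x hx hF
  have ht0 : 0 ≤ t := ht.1
  have ht1 : t ≤ 1 := ht.2
  have h1t : 0 ≤ 1 - t := by linarith
  have hp0 : (0 : ℝ) < p := by linarith
  set s : ℝ := p / 2 with hs_def
  have hs1 : 1 ≤ s := by rw [hs_def]; linarith
  have hs0 : (0 : ℝ) < s := by linarith
  have hp2s : p = 2 * s := by rw [hs_def]; ring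
  set F : Euc N → ℝ := fun y => ((1 - t) * w₀ y ^ s + t * w₁ y ^ s) ^ (2 / p) with hFdef
  set g : Euc N → ℝ := fun y => (1 - t) * w₀ y ^ s + t * w₁ y ^ s with hgdef
  have hFg : ∀ y, F y = g y ^ (2 / p) := fun y => rfl
  have hgnn : ∀ y ∈ Ω, 0 ≤ g y := by
    intro y hy
    have := Real.rpow_nonneg (hw₀n y hy) s
    have := Real.rpow_nonneg (hw₁n y hy) s
    simp only [hgdef]
    nlinarith
  have hFnn : ∀ y ∈ Ω, 0 ≤ F y := fun y hy => Real.rpow_nonneg (hgnn y hy) _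
  -- gradient norms equal fderiv norms
  have hgrad : ∀ f : Euc N → ℝ, ∀ z : Euc N, ‖gradient f z‖ = ‖fderiv ℝ f z‖ := by
    intro f z
    exact LinearIsometryEquiv.norm_map (InnerProductSpace.toDual ℝ (Euc N)).symm _
  -- derivatives
  have hw₀x : DifferentiableAt ℝ w₀ x :=
    (hw₀.contDiffAt (hΩo.mem_nhds hx)).differentiableAt one_ne_zero
  have hw₁x : DifferentiableAt ℝ w₁ x :=
    (hw₁.contDiffAt (hΩo.mem_nhds hx)).differentiableAt one_ne_zero
  have hd0 : HasFDerivAt (fun y => w₀ y ^ s) ((s * w₀ x ^ (s - 1)) • fderiv ℝ w₀ x) x :=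
    (Real.hasDerivAt_rpow_const (Or.inr hs1)).comp_hasFDerivAt x hw₀x.hasFDerivAt
  have hd1 : HasFDerivAt (fun y => w₁ y ^ s) ((s * w₁ x ^ (s - 1)) • fderiv ℝ w₁ x) x :=
    (Real.hasDerivAt_rpow_const (Or.inr hs1)).comp_hasFDerivAt x hw₁x.hasFDerivAt
  have hg : HasFDerivAt g
      ((1 - t) • ((s * w₀ x ^ (s - 1)) • fderiv ℝ w₀ x)
        + t • ((s * w₁ x ^ (s - 1)) • fderiv ℝ w₁ x)) x :=
    (hd0.const_mul (1 - t)).add (hd1.const_mul t)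
  have hGF : HasFDerivAt (fun y => F y ^ s) ((s * F x ^ (s - 1)) • fderiv ℝ F x) x :=
    (Real.hasDerivAt_rpow_const (Or.inr hs1)).comp_hasFDerivAt x hF.hasFDerivAt
  have h2ps : 2 / p * s = 1 := by rw [hp2s]; field_simp
  have heq : (fun y => F y ^ s) =ᶠ[𝓝 x] g := by
    filter_upwards [hΩo.mem_nhds hx] with y hy
    rw [hFg y, ← Real.rpow_mul (hgnn y hy), h2ps, Real.rpow_one]
  have hg' : HasFDerivAt g ((s * F x ^ (s - 1)) • fderiv ℝ F x) x :=
    hGF.congr_of_eventuallyEq heq.symm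
  have key : (s * F x ^ (s - 1)) • fderiv ℝ F x
      = (1 - t) • ((s * w₀ x ^ (s - 1)) • fderiv ℝ w₀ x)
        + t • ((s * w₁ x ^ (s - 1)) • fderiv ℝ w₁ x) := hg'.unique hg
  set A : ℝ := ‖fderiv ℝ w₀ x‖ with hAdef
  set B : ℝ := ‖fderiv ℝ w₁ x‖ with hBdef
  set Z : ℝ := (1 - t) * A ^ s + t * B ^ s with hZdef
  have hA0 : 0 ≤ A := norm_nonneg _
  have hB0 : 0 ≤ B := norm_nonneg _
  have hZ0 : 0 ≤ Z := by
    have := Real.rpow_nonneg hA0 s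
    have := Real.rpow_nonneg hB0 s
    nlinarith
  -- main estimate at exponent s
  have main : ‖fderiv ℝ F x‖ ^ s ≤ Z := by
    by_cases hFx : F x = 0
    · have hloc : IsLocalMin F x := by
        filter_upwards [hΩo.mem_nhds hx] with y hy
        rw [hFx]; exact hFnn y hy
      rw [hloc.fderiv_eq_zero, norm_zero, Real.zero_rpow hs0.ne']
      exact hZ0
    · have hFpos : 0 < F x := lt_of_le_of_ne (hFnn x hx) (Ne.symm hFx)
      have hcoef : 0 < s * F x ^ (s - 1) := by
        have := Real.rpow_pos_of_pos hFpos (s - 1)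
        positivity
      have hnD : s * F x ^ (s - 1) * ‖fderiv ℝ F x‖
          = ‖(1 - t) • ((s * w₀ x ^ (s - 1)) • fderiv ℝ w₀ x)
              + t • ((s * w₁ x ^ (s - 1)) • fderiv ℝ w₁ x)‖ := by
        rw [← key, norm_smul, Real.norm_of_nonneg hcoef.le]
      have ha0 : 0 ≤ w₀ x ^ (s - 1) := Real.rpow_nonneg (hw₀n x hx) _
      have hb0 : 0 ≤ w₁ x ^ (s - 1) := Real.rpow_nonneg (hw₁n x hx) _
      have hD_le : ‖(1 - t) • ((s * w₀ x ^ (s - 1)) • fderiv ℝ w₀ x)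
              + t • ((s * w₁ x ^ (s - 1)) • fderiv ℝ w₁ x)‖
          ≤ s * ((1 - t) * w₀ x ^ (s - 1) * A + t * w₁ x ^ (s - 1) * B) := by
        calc ‖(1 - t) • ((s * w₀ x ^ (s - 1)) • fderiv ℝ w₀ x)
              + t • ((s * w₁ x ^ (s - 1)) • fderiv ℝ w₁ x)‖
            ≤ ‖(1 - t) • ((s * w₀ x ^ (s - 1)) • fderiv ℝ w₀ x)‖
              + ‖t • ((s * w₁ x ^ (s - 1)) • fderiv ℝ w₁ x)‖ := norm_add_le _ _
          _ = s * ((1 - t) * w₀ x ^ (s - 1) * A + t * w₁ x ^ (s - 1) * B) := by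
              rw [norm_smul, norm_smul, norm_smul, norm_smul,
                Real.norm_of_nonneg h1t, Real.norm_of_nonneg ht0,
                Real.norm_of_nonneg (by positivity : (0:ℝ) ≤ s * w₀ x ^ (s - 1)),
                Real.norm_of_nonneg (by positivity : (0:ℝ) ≤ s * w₁ x ^ (s - 1))]
              ring
      have hold : (1 - t) * w₀ x ^ (s - 1) * A + t * w₁ x ^ (s - 1) * B
          ≤ g x ^ ((s - 1) / s) * Z ^ (1 / s) :=
        holder_two hs1 ht0 ht1 (hw₀n x hx) (hw₁n x hx) hA0 hB0
      have hgxF : g x ^ ((s - 1) / s) = F x ^ (s - 1) := by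
        rw [hFg x, ← Real.rpow_mul (hgnn x hx)]
        congr 1
        rw [hp2s]
        field_simp
      have hstep : s * F x ^ (s - 1) * ‖fderiv ℝ F x‖
          ≤ s * F x ^ (s - 1) * Z ^ (1 / s) := by
        rw [hnD]
        calc ‖(1 - t) • ((s * w₀ x ^ (s - 1)) • fderiv ℝ w₀ x)
              + t • ((s * w₁ x ^ (s - 1)) • fderiv ℝ w₁ x)‖
            ≤ s * ((1 - t) * w₀ x ^ (s - 1) * A + t * w₁ x ^ (s - 1) * B) := hD_le
          _ ≤ s * (g x ^ ((s - 1) / s) * Z ^ (1 / s)) := by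
              exact mul_le_mul_of_nonneg_left hold hs0.le
          _ = s * F x ^ (s - 1) * Z ^ (1 / s) := by rw [hgxF]; ring
      have hle : ‖fderiv ℝ F x‖ ≤ Z ^ (1 / s) := le_of_mul_le_mul_left hstep hcoef
      calc ‖fderiv ℝ F x‖ ^ s ≤ (Z ^ (1 / s)) ^ s :=
            Real.rpow_le_rpow (norm_nonneg _) hle hs0.le
        _ = Z := by
            rw [← Real.rpow_mul hZ0, one_div_mul_cancel hs0.ne', Real.rpow_one]
  have hsq : ∀ r : ℝ, 0 ≤ r → r ^ p = (r ^ s) ^ (2 : ℕ) := by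
    intro r hr
    rw [← Real.rpow_natCast (r ^ s) 2, ← Real.rpow_mul hr]
    norm_num
    rw [hp2s]
    ring_nf
  constructor
  · simp only [hgrad]
    exact main
  · simp only [hgrad]
    rw [hsq _ (norm_nonneg _), hsq _ hA0, hsq _ hB0]
    have hL0 : 0 ≤ ‖fderiv ℝ F x‖ ^ s := Real.rpow_nonneg (norm_nonneg _) s
    have hAs : 0 ≤ A ^ s := Real.rpow_nonneg hA0 s
    have hBs : 0 ≤ B ^ s := Real.rpow_nonneg hB0 s
    nlinarith [sq_nonneg (A ^ s - B ^ s), mul_nonneg (mul_nonneg ht0 h1t) (sq_nonneg (A ^ s - B ^ s))]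
end
end
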